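/- arXiv:2112.02318 — 7 statements merged into one kernel-verified Lean document; each statement's English description precedes it below -/
import Mathlib

section
/- Let n be a positive integer and let (g_m)_{m∈ℕ} be a sequence of convex functions g_m : ℝⁿ → ℝ which is pointwise increasing in m and converges pointwise to a convex function g : ℝⁿ → ℝ. For a function f : ℝⁿ → ℝ define its convex conjugate f* : ℝⁿ → EReal by f*(x) = ⨆_{y∈ℝⁿ} (⟨x,y⟩ − f(y)), where the supremum is taken in the extended reals. Then: (a) the sequence (g_m*) is pointwise decreasing in m; and (b) for every x in the intrinsic (relative) interior of the set {x ∈ ℝⁿ : g*(x) < ⊤}, one has ⨅_{m} g_m*(x) = g*(x). -/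
set_option maxHeartbeats 1600000

open Filter

/-- The convex conjugate of `f : ℝⁿ → ℝ`, with values in the extended reals:
`f*(x) = ⨆ y, (⟨x,y⟩ − f(y))`. -/
noncomputable def convexConjugate {n : ℕ} (f : (Fin n → ℝ) → ℝ) (x : Fin n → ℝ) : EReal :=
  ⨆ y : Fin n → ℝ, (((∑ i, x i * y i) - f y : ℝ) : EReal)

section aux

open Set

lemma exists_subgradient {n : ℕ} (f : EuclideanSpace ℝ (Fin n) → ℝ)
    (hf : ConvexOn ℝ Set.univ f) (y₀ : EuclideanSpace ℝ (Fin n)) :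
    ∃ p : EuclideanSpace ℝ (Fin n), ∀ y, f y₀ + (inner ℝ p (y - y₀) : ℝ) ≤ f y := by
  have hcont : Continuous f := continuousOn_univ.mp (hf.continuousOn isOpen_univ)
  have hUopen : IsOpen {q : EuclideanSpace ℝ (Fin n) × ℝ | f q.1 < q.2} :=
    isOpen_lt (hcont.comp continuous_fst) continuous_snd
  have hUconv : Convex ℝ {q : EuclideanSpace ℝ (Fin n) × ℝ | f q.1 < q.2} := by
    have := hf.convex_strict_epigraph
    simpa using this
  have hdisj : (y₀, f y₀) ∉ {q : EuclideanSpace ℝ (Fin n) × ℝ | f q.1 < q.2} := by simp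
  obtain ⟨F, hF⟩ := geometric_hahn_banach_point_open hUconv hUopen hdisj
  have hdec : ∀ (y : EuclideanSpace ℝ (Fin n)) (t : ℝ), F (y, t) = F (y, 0) + t * F (0, 1) := by
    intro y t
    have h : (y, t) = (y, (0:ℝ)) + t • ((0: EuclideanSpace ℝ (Fin n)), (1:ℝ)) := by
      simp [Prod.ext_iff]
    rw [h, map_add, map_smul, smul_eq_mul]
  have hcpos : 0 < F (0, 1) := by
    have h1 : (y₀, f y₀ + 1) ∈ {q : EuclideanSpace ℝ (Fin n) × ℝ | f q.1 < q.2} := by simp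
    have h2 := hF _ h1
    have e1 := hdec y₀ (f y₀)
    have e2 := hdec y₀ (f y₀ + 1)
    nlinarith
  have key : ∀ y, F (y₀, 0) + f y₀ * F (0, 1) ≤ F (y, 0) + f y * F (0, 1) := by
    intro y
    by_contra hcon
    push_neg at hcon
    set c := F (0, 1)
    set ε := (F (y₀, 0) + f y₀ * c - (F (y, 0) + f y * c)) / c with hε_def
    have hε : 0 < ε := by apply div_pos <;> linarith
    have h1 : (y, f y + ε) ∈ {q : EuclideanSpace ℝ (Fin n) × ℝ | f q.1 < q.2} := by
      simp only [mem_setOf_eq]; linarith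
    have h2 := hF _ h1
    have e1 := hdec y₀ (f y₀)
    have e2 := hdec y (f y + ε)
    have e3 : ε * c = F (y₀, 0) + f y₀ * c - (F (y, 0) + f y * c) :=
      div_mul_cancel₀ _ (ne_of_gt hcpos)
    nlinarith
  set p : EuclideanSpace ℝ (Fin n) :=
    (-(F (0, 1))⁻¹) • (InnerProductSpace.toDual ℝ (EuclideanSpace ℝ (Fin n))).symm
      (F.comp (ContinuousLinearMap.inl ℝ (EuclideanSpace ℝ (Fin n)) ℝ)) with hp
  refine ⟨p, fun y => ?_⟩
  have hinner : ∀ v : EuclideanSpace ℝ (Fin n), (inner ℝ p v : ℝ) = -(F (0, 1))⁻¹ * F (v, 0) := by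
    intro v
    rw [hp, real_inner_smul_left, InnerProductSpace.toDual_symm_apply]
    simp
  have h2 := key y
  have h3 : (inner ℝ p (y - y₀) : ℝ) = -(F (0, 1))⁻¹ * (F (y - y₀, 0)) := hinner _
  have h4 : F ((y - y₀ : EuclideanSpace ℝ (Fin n)), (0:ℝ)) = F (y, 0) - F (y₀, 0) := by
    have h : ((y - y₀ : EuclideanSpace ℝ (Fin n)), (0:ℝ)) = (y, (0:ℝ)) - (y₀, (0:ℝ)) := by
      simp [Prod.ext_iff]
    rw [h, map_sub]
  rw [h4] at h3
  have h5 : -(F (0, 1))⁻¹ * (F (y, 0) - F (y₀, 0)) ≤ f y - f y₀ := by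
    rw [neg_mul, neg_le_sub_iff_le_add]
    rw [← mul_le_mul_iff_right₀ hcpos, mul_add, ← mul_assoc, mul_inv_cancel₀ (ne_of_gt hcpos)]
    nlinarith
  linarith [h3 ▸ h5]

lemma conj_ne_bot {n : ℕ} (f : (Fin n → ℝ) → ℝ) (x : Fin n → ℝ) :
    convexConjugate f x ≠ ⊥ := by
  intro hbot
  have h1 : (((∑ i, x i * (0 : Fin n → ℝ) i) - f 0 : ℝ) : EReal) ≤ convexConjugate f x :=
    le_iSup (fun y : Fin n → ℝ => (((∑ i, x i * y i) - f y : ℝ) : EReal)) 0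
  rw [hbot, le_bot_iff] at h1
  exact EReal.coe_ne_bot _ h1

lemma conj_lt_top_bound {n : ℕ} (f : (Fin n → ℝ) → ℝ) (x : Fin n → ℝ)
    (h : convexConjugate f x < ⊤) :
    ∃ c : ℝ, convexConjugate f x = (c : EReal) ∧
      ∀ y : Fin n → ℝ, (∑ i, x i * y i) - f y ≤ c := by
  refine ⟨(convexConjugate f x).toReal,
    (EReal.coe_toReal (ne_of_lt h) (conj_ne_bot f x)).symm, fun y => ?_⟩
  have h1 : (((∑ i, x i * y i) - f y : ℝ) : EReal) ≤ convexConjugate f x :=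
    le_iSup (fun y : Fin n → ℝ => (((∑ i, x i * y i) - f y : ℝ) : EReal)) y
  have h2 : convexConjugate f x ≤ ((convexConjugate f x).toReal : EReal) :=
    EReal.le_coe_toReal (ne_of_lt h)
  exact_mod_cast h1.trans h2

end aux

/-- For an increasing sequence of convex functions `g_m : ℝⁿ → ℝ` converging
pointwise to a convex function `g`, the conjugates `g_m*` are pointwise decreasing, and
`⨅ m, g_m*(x) = g*(x)` on the intrinsic interior of the domain `{x : g*(x) < ⊤}`. -/
theorem conjugates_of_increasing_convex_sequence (n : ℕ) (hn : 0 < n)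
    (g : ℕ → (Fin n → ℝ) → ℝ) (glim : (Fin n → ℝ) → ℝ)
    (hconv : ∀ m, ConvexOn ℝ Set.univ (g m))
    (hmono : ∀ m x, g m x ≤ g (m + 1) x)
    (hlim : ∀ x, Tendsto (fun m => g m x) atTop (nhds (glim x)))
    (hlimconv : ConvexOn ℝ Set.univ glim) :
    (∀ m x, convexConjugate (g (m + 1)) x ≤ convexConjugate (g m) x) ∧
    (∀ x ∈ intrinsicInterior ℝ {x : Fin n → ℝ | convexConjugate glim x < ⊤},
      ⨅ m, convexConjugate (g m) x = convexConjugate glim x) := by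
  have hgle : ∀ m (y : Fin n → ℝ), g m y ≤ glim y := by
    intro m y
    refine ge_of_tendsto (hlim y) (Filter.eventually_atTop.2 ⟨m, fun k hk => ?_⟩)
    exact monotone_nat_of_le_succ (fun j => hmono j y) hk
  constructor
  · intro m x
    exact iSup_mono fun y => EReal.coe_le_coe_iff.2 (by linarith [hmono m y])
  intro x hx
  set S := {x : Fin n → ℝ | convexConjugate glim x < ⊤} with hS
  have hxS : x ∈ S := intrinsicInterior_subset hx
  have hlow : convexConjugate glim x ≤ ⨅ m, convexConjugate (g m) x :=
    le_iInf fun m => iSup_mono fun y => EReal.coe_le_coe_iff.2 (by linarith [hgle m y])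
  obtain ⟨r, hr_eq, hub⟩ := conj_lt_top_bound glim x hxS
  -- δ ball inside the affine span
  obtain ⟨y₀, hy₀i, hy₀x⟩ := hx
  obtain ⟨δ₀, hδ₀pos, hball⟩ := Metric.mem_nhds_iff.1 (mem_interior_iff_mem_nhds.1 hy₀i)
  have hδS : ∀ u : Fin n → ℝ, u ∈ (affineSpan ℝ S).direction → dist (x + u) x < δ₀ →
      x + u ∈ S := by
    intro u hu hd
    have hxA : x ∈ affineSpan ℝ S := hy₀x ▸ y₀.2
    have hmem : x + u ∈ affineSpan ℝ S := by
      have := AffineSubspace.vadd_mem_of_mem_direction hu hxA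
      simpa [vadd_eq_add, add_comm] using this
    have hdist : (⟨x + u, hmem⟩ : affineSpan ℝ S) ∈ Metric.ball y₀ δ₀ := by
      rw [Metric.mem_ball, Subtype.dist_eq, hy₀x]
      exact hd
    have := hball hdist
    rwa [Set.mem_preimage] at this
  classical
  -- bridging inner products and sums
  have hinner : ∀ p q : EuclideanSpace ℝ (Fin n), (inner ℝ p q : ℝ) = ∑ i, p i * q i := by
    intro p q
    simp [PiLp.inner_apply, RCLike.inner_apply, conj_trivial, mul_comm]
  have habs_le_norm : ∀ (u : EuclideanSpace ℝ (Fin n)) (i : Fin n), |u i| ≤ ‖u‖ := by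
    intro u i
    rw [EuclideanSpace.norm_eq, ← Real.sqrt_sq_eq_abs]
    refine Real.sqrt_le_sqrt ?_
    have h1 : (u i)^2 = ‖u i‖^2 := by rw [Real.norm_eq_abs, sq_abs]
    rw [h1]
    exact Finset.single_le_sum (fun j _ => sq_nonneg ‖u j‖) (Finset.mem_univ i)
  set L : Submodule ℝ (EuclideanSpace ℝ (Fin n)) :=
    (affineSpan ℝ S).direction.comap (WithLp.linearEquiv 2 ℝ (Fin n → ℝ)).toLinearMap with hL
  have hδE : ∀ u : EuclideanSpace ℝ (Fin n), u ∈ L → ‖u‖ < δ₀ → x + WithLp.equiv 2 (Fin n → ℝ) u ∈ S := by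
    intro u hu hn2
    refine hδS (WithLp.equiv 2 (Fin n → ℝ) u) hu ?_
    rw [dist_pi_lt_iff hδ₀pos]
    intro i
    rw [Real.dist_eq]
    have h1 : (x + WithLp.equiv 2 (Fin n → ℝ) u) i - x i = u i := by
      show x i + u i - x i = u i
      ring
    rw [h1]
    exact lt_of_le_of_lt (habs_le_norm u i) hn2
  set k := Module.finrank ℝ L with hk
  set b := stdOrthonormalBasis ℝ L with hb
  set δ := δ₀ / 2 with hδ
  have hδpos : 0 < δ := by positivity
  have hδlt : δ < δ₀ := by rw [hδ]; linarith
  have hnormb : ∀ i : Fin k, ‖((b i : L) : EuclideanSpace ℝ (Fin n))‖ = 1 := fun i =>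
    b.orthonormal.1 i
  have hbmemS : ∀ (i : Fin k) (s : ℝ), |s| < δ₀ →
      x + WithLp.equiv 2 (Fin n → ℝ) (s • ((b i : L) : EuclideanSpace ℝ (Fin n))) ∈ S := by
    intro i s hs
    refine hδE _ (L.smul_mem s (b i).2) ?_
    rw [norm_smul, hnormb, mul_one, Real.norm_eq_abs]
    exact hs
  choose Cp hCp using fun i : Fin k =>
    conj_lt_top_bound glim _ (hbmemS i δ (by rwa [abs_of_pos hδpos]))
  choose Cm hCm using fun i : Fin k =>
    conj_lt_top_bound glim _ (hbmemS i (-δ) (by rwa [abs_neg, abs_of_pos hδpos]))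
  set C := (∑ i, (|Cp i| + |Cm i|)) + |r| + 1 with hCdef
  have hsum_nonneg : (0:ℝ) ≤ ∑ i, (|Cp i| + |Cm i|) :=
    Finset.sum_nonneg fun i _ => by positivity
  have hCp' : ∀ i, Cp i ≤ C := by
    intro i
    have h1 : |Cp i| + |Cm i| ≤ ∑ j, (|Cp j| + |Cm j|) :=
      Finset.single_le_sum (f := fun j => |Cp j| + |Cm j|) (fun j _ => by positivity)
        (Finset.mem_univ i)
    have h2 : Cp i ≤ |Cp i| := le_abs_self _
    have h3 : (0:ℝ) ≤ |Cm i| := abs_nonneg _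
    have h4 : (0:ℝ) ≤ |r| := abs_nonneg _
    rw [hCdef]; linarith
  have hCm' : ∀ i, Cm i ≤ C := by
    intro i
    have h1 : |Cp i| + |Cm i| ≤ ∑ j, (|Cp j| + |Cm j|) :=
      Finset.single_le_sum (f := fun j => |Cp j| + |Cm j|) (fun j _ => by positivity)
        (Finset.mem_univ i)
    have h2 : Cm i ≤ |Cm i| := le_abs_self _
    have h3 : (0:ℝ) ≤ |Cp i| := abs_nonneg _
    have h4 : (0:ℝ) ≤ |r| := abs_nonneg _
    rw [hCdef]; linarith
  have hrC : |r| + 1 ≤ C := by rw [hCdef]; linarith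
  -- lower bound for hh y := glim y - ∑ j, x j * y j
  have hhlb : ∀ y : EuclideanSpace ℝ (Fin n), -r ≤ glim y - ∑ j, x j * y j := by
    intro y
    have := hub y
    linarith
  have hChh : ∀ y : EuclideanSpace ℝ (Fin n), 0 < C + (glim y - ∑ j, x j * y j) := by
    intro y
    have h1 := hhlb y
    have h2 : r ≤ |r| := le_abs_self r
    linarith [hrC]
  -- expansion of the sums at shifted points
  have hexp : ∀ (s : ℝ) (v y : EuclideanSpace ℝ (Fin n)),
      (∑ j, (x + WithLp.equiv 2 (Fin n → ℝ) (s • v)) j * y j) =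
        (∑ j, x j * y j) + s * ∑ j, v j * y j := by
    intro s v y
    rw [Finset.mul_sum, ← Finset.sum_add_distrib]
    refine Finset.sum_congr rfl fun j _ => ?_
    have h1 : (x + WithLp.equiv 2 (Fin n → ℝ) (s • v)) j = x j + s * v j := rfl
    rw [h1]; ring
  -- coordinate bound from conjugate finiteness at basis points
  have hBnd : ∀ (i : Fin k) (y : EuclideanSpace ℝ (Fin n)),
      |∑ j, ((b i : L) : EuclideanSpace ℝ (Fin n)) j * y j| ≤
        (C + (glim y - ∑ j, x j * y j)) / δ := by
    intro i y
    have h1 := (hCp i).2 y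
    have h2 := (hCm i).2 y
    rw [hexp δ _ y] at h1
    rw [hexp (-δ) _ y] at h2
    have h1' : δ * (∑ j, ((b i : L) : EuclideanSpace ℝ (Fin n)) j * y j) ≤
        C + (glim y - ∑ j, x j * y j) := by linarith [hCp' i]
    have h2' : δ * (-(∑ j, ((b i : L) : EuclideanSpace ℝ (Fin n)) j * y j)) ≤
        C + (glim y - ∑ j, x j * y j) := by linarith [hCm' i]
    rw [abs_le]
    constructor
    · rw [neg_le, le_div_iff₀ hδpos]
      linarith
    · rw [le_div_iff₀ hδpos]
      linarith
  set τ := δ / (Real.sqrt k + 1) with hτ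
  have hsqrtk : (0:ℝ) ≤ Real.sqrt k := Real.sqrt_nonneg _
  have hτpos : 0 < τ := div_pos hδpos (by linarith)
  have hproj : ∀ y : EuclideanSpace ℝ (Fin n),
      τ * ‖((Submodule.orthogonalProjection L y : L) : EuclideanSpace ℝ (Fin n))‖ ≤
        C + (glim y - ∑ j, x j * y j) := by
    intro y
    set z := Submodule.orthogonalProjection L y with hz
    have hzi : ∀ i : Fin k, (inner ℝ (b i) z : ℝ) =
        (inner ℝ ((b i : L) : EuclideanSpace ℝ (Fin n)) y : ℝ) := by
      intro i
      have horth := Submodule.sub_starProjection_mem_orthogonal (K := L) y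
      have h0 : (inner ℝ ((b i : L) : EuclideanSpace ℝ (Fin n))
          (y - ((z : L) : EuclideanSpace ℝ (Fin n))) : ℝ) = 0 :=
        (Submodule.mem_orthogonal L _).1 horth _ (b i).2
      rw [inner_sub_right] at h0
      have hcoe : (inner ℝ (b i) z : ℝ) =
          (inner ℝ ((b i : L) : EuclideanSpace ℝ (Fin n)) ((z : L) : EuclideanSpace ℝ (Fin n)) : ℝ) :=
        rfl
      rw [hcoe]
      linarith [h0]
    have hnormz : ‖((z : L) : EuclideanSpace ℝ (Fin n))‖ ^ 2 =
        ∑ i : Fin k, (inner ℝ ((b i : L) : EuclideanSpace ℝ (Fin n)) y : ℝ) ^ 2 := by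
      have h1 : ‖((z : L) : EuclideanSpace ℝ (Fin n))‖ = ‖z‖ := rfl
      have h2 : ‖z‖ = ‖b.repr z‖ := (b.repr.norm_map z).symm
      have h3 : ‖b.repr z‖ ^ 2 = ∑ i : Fin k, ‖b.repr z i‖ ^ 2 := by
        rw [EuclideanSpace.norm_eq, Real.sq_sqrt]
        exact Finset.sum_nonneg fun i _ => sq_nonneg _
      rw [h1, h2, h3]
      refine Finset.sum_congr rfl fun i _ => ?_
      rw [b.repr_apply_apply, Real.norm_eq_abs, sq_abs]
      rw [hzi i]
    set q := (C + (glim y - ∑ j, x j * y j)) / δ with hq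
    have hqpos : 0 < q := div_pos (hChh y) hδpos
    have hsum_le : ∑ i : Fin k, (inner ℝ ((b i : L) : EuclideanSpace ℝ (Fin n)) y : ℝ) ^ 2 ≤
        k * q ^ 2 := by
      calc ∑ i : Fin k, (inner ℝ ((b i : L) : EuclideanSpace ℝ (Fin n)) y : ℝ) ^ 2
          ≤ ∑ _i : Fin k, q ^ 2 := by
            refine Finset.sum_le_sum fun i _ => ?_
            have h1 := hBnd i y
            rw [← hinner] at h1
            exact sq_le_sq' (by linarith [abs_le.1 (h1.trans_eq rfl)]) (le_of_abs_le h1)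
        _ = k * q ^ 2 := by simp [Finset.sum_const, nsmul_eq_mul]
    have hnle : ‖((z : L) : EuclideanSpace ℝ (Fin n))‖ ≤ Real.sqrt k * q := by
      have h1 : ‖((z : L) : EuclideanSpace ℝ (Fin n))‖ =
          Real.sqrt (‖((z : L) : EuclideanSpace ℝ (Fin n))‖ ^ 2) :=
        (Real.sqrt_sq (norm_nonneg _)).symm
      rw [h1, hnormz]
      calc Real.sqrt (∑ i : Fin k, (inner ℝ ((b i : L) : EuclideanSpace ℝ (Fin n)) y : ℝ) ^ 2)
          ≤ Real.sqrt (k * q ^ 2) := Real.sqrt_le_sqrt hsum_le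
        _ = Real.sqrt k * q := by
            rw [Real.sqrt_mul (by positivity), Real.sqrt_sq hqpos.le]
    have hτs : τ * (Real.sqrt k + 1) = δ := by
      rw [hτ]
      field_simp
    calc τ * ‖((z : L) : EuclideanSpace ℝ (Fin n))‖ ≤ τ * (Real.sqrt k * q) := by
          exact mul_le_mul_of_nonneg_left hnle hτpos.le
      _ ≤ τ * ((Real.sqrt k + 1) * q) := by nlinarith
      _ = δ * q := by rw [← hτs]; ring
      _ = C + (glim y - ∑ j, x j * y j) := by
          rw [hq, mul_div_cancel₀ _ (ne_of_gt hδpos)]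
  have hPself : ∀ z : EuclideanSpace ℝ (Fin n), z ∈ L →
      ((Submodule.orthogonalProjection L z : L) : EuclideanSpace ℝ (Fin n)) = z := fun z hz =>
    Submodule.starProjection_eq_self_iff.2 hz
  have hexp2 : ∀ a d : EuclideanSpace ℝ (Fin n),
      (∑ j, x j * (a + d) j) = (∑ j, x j * a j) + ∑ j, x j * d j := by
    intro a d
    rw [← Finset.sum_add_distrib]
    refine Finset.sum_congr rfl fun j _ => ?_
    have h1 : (a + d) j = a j + d j := rfl
    rw [h1]; ring
  have hflat1 : ∀ f : (Fin n → ℝ) → ℝ, ConvexOn ℝ Set.univ f →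
      (∀ z : Fin n → ℝ, convexConjugate glim z ≤ convexConjugate f z) →
      ∀ a d : EuclideanSpace ℝ (Fin n),
        (∀ v : EuclideanSpace ℝ (Fin n), v ∈ L → (inner ℝ v d : ℝ) = 0) →
        f (a + d) - (∑ j, x j * (a + d) j) ≤ f a - ∑ j, x j * a j := by
    intro f hf hle a d hd
    have hfE : ConvexOn ℝ (Set.univ : Set (EuclideanSpace ℝ (Fin n))) (fun y => f y) :=
      hf.comp_linearMap (WithLp.linearEquiv 2 ℝ (Fin n → ℝ)).toLinearMap
    obtain ⟨p, hp⟩ := exists_subgradient (fun y => f y) hfE (a + d)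
    simp only [WithLp.ofLp_add] at hp
    have hconjf : convexConjugate f (WithLp.equiv 2 (Fin n → ℝ) p) < ⊤ := by
      refine lt_of_le_of_lt (iSup_le fun y => ?_)
        (EReal.coe_lt_top ((inner ℝ p (a + d) : ℝ) - f (a + d)))
      rw [EReal.coe_le_coe_iff]
      have h1 := hp (WithLp.toLp 2 y)
      rw [inner_sub_right, WithLp.ofLp_toLp] at h1
      have h2 : (∑ i, WithLp.equiv 2 (Fin n → ℝ) p i * y i) = (inner ℝ p (WithLp.toLp 2 y) : ℝ) := by
        rw [hinner]; rfl
      rw [h2]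
      linarith
    have hpS : WithLp.equiv 2 (Fin n → ℝ) p ∈ S := by
      have := lt_of_le_of_lt (hle (WithLp.equiv 2 (Fin n → ℝ) p)) hconjf
      exact this
    have hxA : x ∈ affineSpan ℝ S := subset_affineSpan ℝ S hxS
    have hpA : WithLp.equiv 2 (Fin n → ℝ) p ∈ affineSpan ℝ S := subset_affineSpan ℝ S hpS
    have hdir : WithLp.equiv 2 (Fin n → ℝ) p - x ∈ (affineSpan ℝ S).direction := by
      have := AffineSubspace.vsub_mem_direction hpA hxA
      simpa [vsub_eq_sub] using this
    have hpxL : p - (WithLp.equiv 2 (Fin n → ℝ)).symm x ∈ L := hdir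
    have horth := hd _ hpxL
    rw [inner_sub_left] at horth
    have h3 := hp a
    have h4 : a - (a + d) = -d := by abel
    rw [h4, inner_neg_right] at h3
    have h5 : (∑ j, x j * d j) = (inner ℝ ((WithLp.equiv 2 (Fin n → ℝ)).symm x) d : ℝ) := by
      rw [hinner]; rfl
    rw [hexp2 a d, h5]
    linarith
  have hconjle : ∀ m (z : Fin n → ℝ), convexConjugate glim z ≤ convexConjugate (g m) z :=
    fun m z => iSup_mono fun y => EReal.coe_le_coe_iff.2 (by linarith [hgle m y])
  have hflat : ∀ f : (Fin n → ℝ) → ℝ, ConvexOn ℝ Set.univ f →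
      (∀ z : Fin n → ℝ, convexConjugate glim z ≤ convexConjugate f z) →
      ∀ y : EuclideanSpace ℝ (Fin n),
        f y - (∑ j, x j * y j) =
          f ((Submodule.orthogonalProjection L y : L) : EuclideanSpace ℝ (Fin n)) -
            ∑ j, x j * ((Submodule.orthogonalProjection L y : L) : EuclideanSpace ℝ (Fin n)) j := by
    intro f hf hle y
    set z := ((Submodule.orthogonalProjection L y : L) : EuclideanSpace ℝ (Fin n)) with hzdef
    have hdorth : ∀ v : EuclideanSpace ℝ (Fin n), v ∈ L → (inner ℝ v (y - z) : ℝ) = 0 :=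
      fun v hv => (Submodule.mem_orthogonal L _).1
        (Submodule.sub_starProjection_mem_orthogonal (K := L) y) v hv
    have h1 := hflat1 f hf hle z (y - z) hdorth
    have h2 := hflat1 f hf hle y (z - y) (fun v hv => by
      have h0 := hdorth v hv
      have he : z - y = -(y - z) := by abel
      rw [he, inner_neg_right, h0, neg_zero])
    have e1 : z + (y - z) = y := by abel
    have e2 : y + (z - y) = z := by abel
    rw [← WithLp.ofLp_add, e1] at h1
    rw [← WithLp.ofLp_add, e2] at h2
    linarith
  -- continuity on the euclidean space
  have hcontE : ∀ f : (Fin n → ℝ) → ℝ, ConvexOn ℝ Set.univ f →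
      Continuous (fun y : EuclideanSpace ℝ (Fin n) => f y) := by
    intro f hf
    have hfE : ConvexOn ℝ (Set.univ : Set (EuclideanSpace ℝ (Fin n))) (fun y => f y) :=
      hf.comp_linearMap (WithLp.linearEquiv 2 ℝ (Fin n → ℝ)).toLinearMap
    exact continuousOn_univ.mp (hfE.continuousOn isOpen_univ)
  -- choice of the radius
  set R := max ((C + (glim 0 + 1)) / τ) 1 with hR
  have hR1 : (1:ℝ) ≤ R := le_max_right _ _
  have hRτ : C + (glim 0 + 1) ≤ τ * R := by
    have h1 : (C + (glim 0 + 1)) / τ ≤ R := le_max_left _ _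
    rw [div_le_iff₀ hτpos] at h1
    linarith [h1]
  have hzero : (∑ j, x j * (0 : EuclideanSpace ℝ (Fin n)) j) = 0 := by
    refine Finset.sum_eq_zero fun j _ => ?_
    have h0 : (0 : EuclideanSpace ℝ (Fin n)) j = 0 := rfl
    rw [h0, mul_zero]
  have hsphere : ∀ z : EuclideanSpace ℝ (Fin n), z ∈ L → ‖z‖ = R →
      glim 0 + 1 ≤ glim z - ∑ j, x j * z j := by
    intro z hzL hzR
    have h1 := hproj z
    rw [hPself z hzL, hzR] at h1
    linarith
  set K := (L : Set (EuclideanSpace ℝ (Fin n))) ∩ Metric.closedBall 0 R with hK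
  have hKcomp : IsCompact K :=
    (isCompact_closedBall (0 : EuclideanSpace ℝ (Fin n)) R).inter_left
      (Submodule.closed_of_finiteDimensional L)
  -- the key quantitative estimate
  have key : ∀ ε : ℝ, 0 < ε → ∃ M : ℕ, ∀ y : Fin n → ℝ,
      (∑ j, x j * y j) - g M y ≤ r + ε := by
    intro ε hε
    set ε' := min ε (1/2) with hε'def
    have hε'pos : 0 < ε' := lt_min hε (by norm_num)
    have hε'le : ε' ≤ ε := min_le_left _ _
    have hε'half : ε' ≤ 1/2 := min_le_right _ _
    set U : ℕ → Set (EuclideanSpace ℝ (Fin n)) := fun m => {w | glim w - ε' < g m w} with hU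
    have hUopen : ∀ m, IsOpen (U m) := fun m =>
      isOpen_lt ((hcontE glim hlimconv).sub continuous_const) (hcontE (g m) (hconv m))
    have hcover : K ⊆ ⋃ m, U m := by
      intro w _
      have h1 : glim w - ε' < glim w := by linarith
      have h2 := (hlim w).eventually (eventually_gt_nhds h1)
      obtain ⟨m, hm⟩ := h2.exists
      exact Set.mem_iUnion.2 ⟨m, hm⟩
    obtain ⟨t, ht⟩ := hKcomp.elim_finite_subcover U hUopen hcover
    set M := t.sup id with hM
    have hUmono : Monotone U :=
      monotone_nat_of_le_succ fun m w hw => lt_of_lt_of_le hw (hmono m w)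
    have hMK : ∀ w ∈ K, glim w - ε' < g M w := by
      intro w hw
      obtain ⟨m, hm, hwm⟩ := Set.mem_iUnion₂.1 (ht hw)
      exact hUmono (Finset.le_sup (f := id) hm) hwm
    refine ⟨M, fun y => ?_⟩
    suffices hgoal : -r - ε ≤ g M y - ∑ j, x j * y j by linarith
    have hflatM := hflat (g M) (hconv M) (hconjle M) (WithLp.toLp 2 y)
    simp only [WithLp.ofLp_toLp] at hflatM
    rw [hflatM]
    set z := ((Submodule.orthogonalProjection L (WithLp.toLp 2 y) : L) :
      EuclideanSpace ℝ (Fin n)) with hzdef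
    have hzL : z ∈ L := (Submodule.orthogonalProjection L (WithLp.toLp 2 y)).2
    have hzlb := hhlb z
    clear_value z
    by_cases hcase : ‖z‖ ≤ R
    · have hzK : z ∈ K := ⟨hzL, by rwa [Metric.mem_closedBall, dist_zero_right]⟩
      have h1 := hMK z hzK
      linarith [hzlb]
    · push_neg at hcase
      have hznorm : (0:ℝ) < ‖z‖ := by linarith
      set θ := R / ‖z‖ with hθdef
      have hθpos : 0 < θ := div_pos (by linarith) hznorm
      have hθ1 : θ < 1 := by
        rw [hθdef, div_lt_one hznorm]
        exact hcase
      set z' := θ • z with hz'def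
      have hz'L : z' ∈ L := L.smul_mem _ hzL
      have hz'n : ‖z'‖ = R := by
        rw [hz'def, norm_smul, Real.norm_eq_abs, abs_of_pos hθpos, hθdef,
          div_mul_cancel₀ _ (ne_of_gt hznorm)]
      have hz'K : z' ∈ K := ⟨hz'L, by
        rw [Metric.mem_closedBall, dist_zero_right, hz'n]⟩
      have h1 : glim z' - ε' < g M z' := hMK z' hz'K
      have h2 : glim 0 + 1 ≤ glim z' - ∑ j, x j * z' j := hsphere z' hz'L hz'n
      have h3 : g M (0 : EuclideanSpace ℝ (Fin n)) ≤ glim (0 : EuclideanSpace ℝ (Fin n)) :=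
        hgle M 0
      have h3' : glim (WithLp.ofLp (0 : EuclideanSpace ℝ (Fin n))) = glim 0 := rfl
      have hconvM : ConvexOn ℝ (Set.univ : Set (EuclideanSpace ℝ (Fin n))) (fun y => g M y) :=
        (hconv M).comp_linearMap (WithLp.linearEquiv 2 ℝ (Fin n → ℝ)).toLinearMap
      have hcc := hconvM.2 (Set.mem_univ (0 : EuclideanSpace ℝ (Fin n))) (Set.mem_univ z)
        (by linarith : (0:ℝ) ≤ 1 - θ) hθpos.le (by ring)
      have hzz : (1-θ) • (0 : EuclideanSpace ℝ (Fin n)) + θ • z = z' := by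
        rw [smul_zero, zero_add, hz'def]
      rw [hzz, smul_eq_mul, smul_eq_mul] at hcc
      beta_reduce at hcc
      have hlinz' : (∑ j, x j * z' j) = θ * ∑ j, x j * z j := by
        rw [Finset.mul_sum]
        refine Finset.sum_congr rfl fun j _ => ?_
        have h0 : z' j = θ * z j := rfl
        rw [h0]; ring
      -- abbreviations
      set A := g M z - ∑ j, x j * z j with hA
      set B := g M z' - ∑ j, x j * z' j with hB
      have hBlow : glim 0 + 1 - ε' ≤ B := by
        rw [hB]; linarith
      have hB1 : g M (0 : EuclideanSpace ℝ (Fin n)) + 1/2 ≤ B := by linarith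
      have hBle : B ≤ (1-θ) * g M (0 : EuclideanSpace ℝ (Fin n)) + θ * A := by
        rw [hB, hA, hlinz']
        nlinarith [hcc]
      have e4 : θ * g M (0 : EuclideanSpace ℝ (Fin n)) + 1/2 ≤ θ * A := by nlinarith
      have e5 : (0:ℝ) < A - g M (0 : EuclideanSpace ℝ (Fin n)) := by nlinarith
      have hAB : B ≤ A := by nlinarith [mul_nonneg (by linarith : (0:ℝ) ≤ 1 - θ) e5.le]
      have hBlb : -r - ε' ≤ B := by
        have := hhlb z'
        rw [hB]
        linarith
      linarith
  -- conclusion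
  have hupper : (⨅ m, convexConjugate (g m) x) ≤ convexConjugate glim x := by
    rw [hr_eq]
    by_contra hcon
    push_neg at hcon
    obtain ⟨c, hc1, hc2⟩ := EReal.exists_between_coe_real hcon
    obtain ⟨M, hM⟩ := key (c - r) (by
      have : (r : EReal) < (c : EReal) := hc1
      rw [EReal.coe_lt_coe_iff] at this
      linarith)
    have hle : convexConjugate (g M) x ≤ (c : EReal) := by
      refine iSup_le fun y => ?_
      rw [EReal.coe_le_coe_iff]
      have := hM y
      linarith
    exact absurd (lt_of_lt_of_le hc2 ((iInf_le _ M).trans hle)) (lt_irrefl _)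
  exact le_antisymm hupper hlow
end

section
/- Let n be a positive integer and let Q ⊆ {x ∈ ℝⁿ : ∀i, xᵢ ≤ 0} be a nonempty rational H-polyhedron such that Q + ℝⁿ_{≤0} ⊆ Q, and let g : ℝⁿ → ℝ be a function that is convex on Q and increasing in each variable on Q (if x, y ∈ Q with xᵢ ≤ yᵢ for all i, then g(x) ≤ g(y)). Then the following are equivalent: (1) the epigraph epi(g) = {(x,t) ∈ ℝⁿ × ℝ : x ∈ Q and t ≥ g(x)} is a rational H-polyhedron in ℝⁿ × ℝ; (2) there exist finitely many vectors s₁, …, s_N ∈ ℚⁿ with all components nonnegative and rational numbers a₁, …, a_N such that g(x) = max_{1≤i≤N} (⟨sᵢ,x⟩ + aᵢ) for all x ∈ Q. -/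
open Pointwise
/-- A rational H-polyhedron in `ℝⁿ`: a finite intersection of closed half-spaces
`{x : ⟨a,x⟩ ≤ b}` with rational normal vectors `a` and rational constants `b`. -/
def IsRatHPolyhedron (n : ℕ) (Q : Set (Fin n → ℝ)) : Prop :=
  ∃ (N : ℕ) (a : Fin N → Fin n → ℚ) (b : Fin N → ℚ),
    Q = ⋂ k : Fin N, {x : Fin n → ℝ | ∑ i, (a k i : ℝ) * x i ≤ (b k : ℝ)}

/-- A rational H-polyhedron in `ℝⁿ × ℝ`: a finite intersection of closed half-spaces
`{(x,t) : ⟨a,x⟩ + s·t ≤ b}` with `a ∈ ℚⁿ` and `s, b ∈ ℚ`. -/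
def IsRatHPolyhedronProd (n : ℕ) (S : Set ((Fin n → ℝ) × ℝ)) : Prop :=
  ∃ (N : ℕ) (a : Fin N → Fin n → ℚ) (s : Fin N → ℚ) (b : Fin N → ℚ),
    S = ⋂ k : Fin N, {p : (Fin n → ℝ) × ℝ |
      (∑ i, (a k i : ℝ) * p.1 i) + (s k : ℝ) * p.2 ≤ (b k : ℝ)}

/-- For a nonempty rational H-polyhedron `Q ⊆ ℝⁿ_{≤0}` with
`Q + ℝⁿ_{≤0} ⊆ Q` and `g` convex on `Q` and increasing in each variable on `Q`,
the epigraph of `g` (over `Q`) is a rational H-polyhedron iff `g` is, on `Q`, a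
finite maximum of rational affine functions with nonnegative slopes. -/
theorem epigraph_ratHPolyhedron_iff_maxAffine (n : ℕ) (hn : 0 < n)
    (Q : Set (Fin n → ℝ)) (hQne : Q.Nonempty)
    (hQsub : Q ⊆ {x : Fin n → ℝ | ∀ i, x i ≤ 0})
    (hQpoly : IsRatHPolyhedron n Q)
    (hQrec : Q + {q : Fin n → ℝ | ∀ i, q i ≤ 0} ⊆ Q)
    (g : (Fin n → ℝ) → ℝ)
    (hconv : ConvexOn ℝ Q g)
    (hmono : ∀ x ∈ Q, ∀ y ∈ Q, (∀ i, x i ≤ y i) → g x ≤ g y) :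
    IsRatHPolyhedronProd n {p : (Fin n → ℝ) × ℝ | p.1 ∈ Q ∧ g p.1 ≤ p.2} ↔
    ∃ (N : ℕ) (_ : 0 < N) (s : Fin N → Fin n → ℚ) (a : Fin N → ℚ),
      (∀ k i, 0 ≤ s k i) ∧
      ∀ x ∈ Q, g x = ⨆ k : Fin N, ((∑ i, (s k i : ℝ) * x i) + (a k : ℝ)) := by
  classical
  constructor
  · rintro ⟨N, a, s, b, hEpi⟩
    obtain ⟨x₀, hx₀⟩ := hQne
    have hmem : ∀ x ∈ Q, ∀ t, g x ≤ t → ∀ k,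
        (∑ i, (a k i : ℝ) * x i) + (s k : ℝ) * t ≤ (b k : ℝ) := by
      intro x hx t ht k
      have hx' : (x, t) ∈ {p : (Fin n → ℝ) × ℝ | p.1 ∈ Q ∧ g p.1 ≤ p.2} := ⟨hx, ht⟩
      rw [hEpi] at hx'
      exact Set.mem_iInter.mp hx' k
    have hsle : ∀ k, (s k : ℚ) ≤ 0 := by
      intro k
      by_contra h
      push_neg at h
      have hs : (0:ℝ) < (s k : ℝ) := by exact_mod_cast h
      set A := ∑ i, (a k i : ℝ) * x₀ i with hA
      set t := max (g x₀) (((b k:ℝ) - A)/(s k:ℝ) + 1) with ht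
      have h1 := hmem x₀ hx₀ t (le_max_left _ _) k
      rw [← hA] at h1
      have h2 : ((b k:ℝ) - A)/(s k:ℝ) + 1 ≤ t := le_max_right _ _
      have h3 : ((b k:ℝ) - A) + (s k:ℝ) ≤ (s k:ℝ) * t := by
        have h4 := mul_le_mul_of_nonneg_left h2 hs.le
        rw [mul_add, mul_one, mul_div_cancel₀ _ hs.ne'] at h4
        linarith
      linarith
    have hK : ∃ k₀, (s k₀ : ℚ) < 0 := by
      by_contra h
      push_neg at h
      have hs0 : ∀ k, (s k : ℚ) = 0 := fun k => le_antisymm (hsle k) (h k)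
      have h1 := hmem x₀ hx₀ (g x₀) le_rfl
      have hmem2 : (x₀, g x₀ - 1) ∈ ⋂ k, {p : (Fin n → ℝ) × ℝ |
          (∑ i, (a k i : ℝ) * p.1 i) + (s k : ℝ) * p.2 ≤ (b k : ℝ)} := by
        refine Set.mem_iInter.mpr fun k => ?_
        have h2 := h1 k
        rw [hs0 k] at h2 ⊢
        push_cast at h2 ⊢
        simp only [Set.mem_setOf_eq]
        simpa using h2
      rw [← hEpi] at hmem2
      have := hmem2.2
      simp at this
      linarith
    obtain ⟨k₀, hk₀⟩ := hK
    have hN : 0 < N := k₀.pos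
    set ψ : Fin N → Fin N := fun k => if (s k : ℚ) < 0 then k else k₀ with hψ
    have hψneg : ∀ k, (s (ψ k) : ℚ) < 0 := by
      intro k
      by_cases h : (s k:ℚ) < 0 <;> simp [hψ, h, hk₀]
    have hψneg' : ∀ k, ((s (ψ k) : ℝ)) < 0 := by
      intro k; exact_mod_cast hψneg k
    set s' : Fin N → Fin n → ℚ := fun k i => a (ψ k) i / (-(s (ψ k))) with hs'
    set a' : Fin N → ℚ := fun k => b (ψ k) / (s (ψ k)) with ha'
    set ℓ : Fin N → (Fin n → ℝ) → ℝ :=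
      fun k x => (∑ i, (s' k i : ℝ) * x i) + (a' k : ℝ) with hℓ
    have hkey : ∀ k x, ℓ k x =
        ((∑ i, (a (ψ k) i : ℝ) * x i) - (b (ψ k) : ℝ)) / (-(s (ψ k) : ℝ)) := by
      intro k x
      have hS : ((s (ψ k) : ℝ)) ≠ 0 := (hψneg' k).ne
      simp only [hℓ, hs', ha']
      push_cast
      rw [eq_div_iff (by simpa using hS)]
      rw [add_mul, Finset.sum_mul]
      have : ∀ i, (a (ψ k) i : ℝ) / (-(s (ψ k) : ℝ)) * x i * (-(s (ψ k) : ℝ))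
          = (a (ψ k) i : ℝ) * x i := by
        intro i; field_simp
      rw [Finset.sum_congr rfl (fun i _ => this i)]
      field_simp
      ring
    have hAle : ∀ k, ∀ x ∈ Q, ℓ k x ≤ g x := by
      intro k x hx
      have hc := hmem x hx (g x) le_rfl (ψ k)
      rw [hkey k x]
      rw [div_le_iff₀ (by linarith [hψneg' k])]
      nlinarith [hψneg' k]
    haveI : Nonempty (Fin N) := ⟨k₀⟩
    have hBle : ∀ x ∈ Q, g x ≤ ⨆ k, ℓ k x := by
      intro x hx
      set T := ⨆ k, ℓ k x with hT
      have hle : ∀ k, ℓ k x ≤ T :=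
        fun k => le_ciSup (f := fun k => ℓ k x)
          (Set.Finite.bddAbove (Set.finite_range _)) k
      have hmemT : (x, T) ∈ ⋂ k, {p : (Fin n → ℝ) × ℝ |
          (∑ i, (a k i : ℝ) * p.1 i) + (s k : ℝ) * p.2 ≤ (b k : ℝ)} := by
        refine Set.mem_iInter.mpr fun k => ?_
        simp only [Set.mem_setOf_eq]
        by_cases h : (s k : ℚ) < 0
        · have hψk : ψ k = k := by simp [hψ, h]
          have h1 := hle k
          rw [hkey k x, hψk] at h1
          have hS : ((s k:ℝ)) < 0 := by exact_mod_cast h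
          rw [div_le_iff₀ (by linarith)] at h1
          nlinarith
        · have hs0 : (s k:ℚ) = 0 := le_antisymm (hsle k) (not_lt.mp h)
          have h1 := hmem x hx (g x) le_rfl k
          rw [hs0] at h1 ⊢
          push_cast at h1 ⊢
          simpa using h1
      rw [← hEpi] at hmemT
      exact hmemT.2
    refine ⟨N, hN, s', a', ?_, ?_⟩
    · intro k i
      by_contra hcon
      push_neg at hcon
      have hc : ((s' k i : ℝ)) < 0 := by exact_mod_cast hcon
      set lam := (g x₀ - ℓ k x₀ + 1) / (-(s' k i : ℝ)) with hlam
      have hlampos : 0 < lam := by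
        apply div_pos
        · have := hAle k x₀ hx₀; linarith
        · linarith
      set v : Fin n → ℝ := fun j => if j = i then -lam else 0 with hv
      have hvneg : v ∈ {q : Fin n → ℝ | ∀ j, q j ≤ 0} := by
        intro j
        simp only [hv]
        by_cases h : j = i <;> simp [h] <;> linarith
      have hyQ : x₀ + v ∈ Q := hQrec (Set.add_mem_add hx₀ hvneg)
      have hyle : ∀ j, (x₀ + v) j ≤ x₀ j := by
        intro j
        have := hvneg j
        simp only [Pi.add_apply]
        linarith
      have hgy : g (x₀ + v) ≤ g x₀ := hmono _ hyQ _ hx₀ hyle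
      have hsum : (∑ j, (s' k j : ℝ) * ((x₀ + v) j))
          = (∑ j, (s' k j : ℝ) * x₀ j) + (s' k i : ℝ) * (-lam) := by
        simp only [Pi.add_apply, mul_add, Finset.sum_add_distrib]
        congr 1
        rw [Finset.sum_eq_single i]
        · simp [hv]
        · intro j _ hj; simp [hv, hj]
        · intro h; exact absurd (Finset.mem_univ i) h
      have hly : ℓ k (x₀ + v) = ℓ k x₀ + (s' k i : ℝ) * (-lam) := by
        simp only [hℓ, hsum]; ring
      have hcl : (s' k i : ℝ) * (-lam) = g x₀ - ℓ k x₀ + 1 := by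
        have hcne : ((s' k i : ℝ)) ≠ 0 := hc.ne
        rw [hlam, div_neg, mul_neg, mul_neg, neg_neg, ← mul_div_assoc,
          mul_div_cancel_left₀ _ hcne]
      have h1 := hAle k (x₀ + v) hyQ
      rw [hly, hcl] at h1
      linarith
    · intro x hx
      exact le_antisymm (hBle x hx) (ciSup_le fun k => hAle k x hx)
  · rintro ⟨N, hN, s, a, hnn, hrep⟩
    obtain ⟨M, A, B, hQ⟩ := hQpoly
    haveI : Nonempty (Fin N) := Fin.pos_iff_nonempty.mp hN
    refine ⟨M + N, Fin.addCases (fun j => A j) (fun j => s j),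
      Fin.addCases (fun _ => (0:ℚ)) (fun _ => (-1:ℚ)),
      Fin.addCases B (fun j => -(a j)), ?_⟩
    ext ⟨x, t⟩
    simp only [Set.mem_setOf_eq, Set.mem_iInter]
    constructor
    · rintro ⟨hxQ, hgt⟩ k
      refine Fin.addCases ?_ ?_ k
      · intro j
        simp only [Fin.addCases_left]
        have h1 := Set.mem_iInter.mp (hQ ▸ hxQ) j
        simp only [Set.mem_setOf_eq] at h1
        push_cast
        simpa using h1
      · intro j
        simp only [Fin.addCases_right]
        have h1 : (∑ i, (s j i:ℝ) * x i) + (a j:ℝ) ≤ g x := by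
          rw [hrep x hxQ]
          exact le_ciSup (f := fun k => (∑ i, (s k i:ℝ) * x i) + (a k:ℝ))
            (Set.Finite.bddAbove (Set.finite_range _)) j
        push_cast
        linarith
    · intro h
      have hxQ : x ∈ Q := by
        rw [hQ]
        refine Set.mem_iInter.mpr fun j => ?_
        have h1 := h (Fin.castAdd N j)
        simp only [Fin.addCases_left] at h1
        push_cast at h1
        simp only [Set.mem_setOf_eq]
        linarith
      refine ⟨hxQ, ?_⟩
      rw [hrep x hxQ]
      refine ciSup_le fun j => ?_
      have h1 := h (Fin.natAdd M j)
      simp only [Fin.addCases_right] at h1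
      push_cast at h1
      linarith
end

section
/- Let n be a positive integer and let P ⊆ {x ∈ ℝⁿ : ∀i, xᵢ ≥ 0} be a nonempty rational H-polyhedron such that P + ℝⁿ_{≥0} ⊆ P, and let h : ℝⁿ → ℝ be a function that is convex on P and decreasing in each variable on P (if x, y ∈ P with xᵢ ≤ yᵢ for all i, then h(y) ≤ h(x)). Then the following are equivalent: (1) the epigraph epi(h) = {(x,t) ∈ ℝⁿ × ℝ : x ∈ P and t ≥ h(x)} is a rational H-polyhedron in ℝⁿ × ℝ; (2) there exist finitely many vectors t₁, …, t_N ∈ ℚⁿ with all components nonpositive and rational numbers b₁, …, b_N such that h(x) = max_{1≤i≤N} (⟨tᵢ,x⟩ + bᵢ) for all x ∈ P. -/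
open Pointwise

/-- For a nonempty rational H-polyhedron `P ⊆ ℝⁿ_{≥0}` with
`P + ℝⁿ_{≥0} ⊆ P` and `h` convex on `P` and decreasing in each variable on `P`,
the epigraph of `h` (over `P`) is a rational H-polyhedron iff `h` is, on `P`, a
finite maximum of rational affine functions with nonpositive slopes. -/
theorem epigraph_ratHPolyhedron_iff_maxAffine_decreasing (n : ℕ) (hn : 0 < n)
    (P : Set (Fin n → ℝ)) (hPne : P.Nonempty)
    (hPsub : P ⊆ {x : Fin n → ℝ | ∀ i, 0 ≤ x i})
    (hPpoly : IsRatHPolyhedron n P)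
    (hPrec : P + {q : Fin n → ℝ | ∀ i, 0 ≤ q i} ⊆ P)
    (h : (Fin n → ℝ) → ℝ)
    (hconv : ConvexOn ℝ P h)
    (hmono : ∀ x ∈ P, ∀ y ∈ P, (∀ i, x i ≤ y i) → h y ≤ h x) :
    IsRatHPolyhedronProd n {p : (Fin n → ℝ) × ℝ | p.1 ∈ P ∧ h p.1 ≤ p.2} ↔
    ∃ (N : ℕ) (_ : 0 < N) (t : Fin N → Fin n → ℚ) (b : Fin N → ℚ),
      (∀ k i, t k i ≤ 0) ∧
      ∀ x ∈ P, h x = ⨆ k : Fin N, ((∑ i, (t k i : ℝ) * x i) + (b k : ℝ)) := by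
  obtain ⟨x₀, hx₀⟩ := hPne
  constructor
  · rintro ⟨N, a, s, b, hepi⟩
    -- membership characterization
    have hmem : ∀ p : (Fin n → ℝ) × ℝ, (p.1 ∈ P ∧ h p.1 ≤ p.2) ↔
        ∀ k, (∑ i, (a k i : ℝ) * p.1 i) + (s k : ℝ) * p.2 ≤ (b k : ℝ) := by
      intro p
      have := Set.ext_iff.mp hepi p
      simpa [Set.mem_iInter] using this
    -- all s k ≤ 0
    have hs : ∀ k, (s k : ℝ) ≤ 0 := by
      intro k
      by_contra hpos
      push_neg at hpos
      set A : ℝ := ∑ i, (a k i : ℝ) * x₀ i with hA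
      set T : ℝ := max (h x₀) (((b k : ℝ) - A) / (s k : ℝ) + 1) with hT
      have hmem' := (hmem (x₀, T)).mp ⟨hx₀, le_max_left _ _⟩ k
      have h1 : ((b k : ℝ) - A) / (s k : ℝ) + 1 ≤ T := le_max_right _ _
      have h2 : (s k : ℝ) * (((b k : ℝ) - A) / (s k : ℝ) + 1) = (b k : ℝ) - A + (s k : ℝ) := by
        field_simp
      nlinarith [mul_le_mul_of_nonneg_left h1 (le_of_lt hpos)]
    -- some k₀ with s k₀ < 0
    have hk₀ : ∃ k₀, s k₀ < 0 := by
      by_contra hno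
      push_neg at hno
      have hzero : ∀ k, (s k : ℝ) = 0 := by
        intro k
        have : (0 : ℝ) ≤ (s k : ℝ) := by exact_mod_cast hno k
        linarith [hs k]
      have hx₀mem := (hmem (x₀, h x₀)).mp ⟨hx₀, le_refl _⟩
      have : h x₀ ≤ h x₀ - 1 := by
        have := (hmem (x₀, h x₀ - 1)).mpr (fun k => by
          have := hx₀mem k
          rw [hzero k] at this ⊢
          simpa using this)
        exact this.2
      linarith
    obtain ⟨k₀, hk₀lt⟩ := hk₀
    haveI : Nonempty (Fin N) := ⟨k₀⟩
    set t' : Fin N → Fin n → ℚ := fun k i => if s k < 0 then -(a k i) / s k else -(a k₀ i) / s k₀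
      with ht'
    set c : Fin N → ℚ := fun k => if s k < 0 then b k / s k else b k₀ / s k₀ with hc
    -- the key equivalence for halfspaces with s k < 0
    have hℓ : ∀ k, s k < 0 → ∀ (x : Fin n → ℝ) (T : ℝ),
        ((∑ i, (a k i : ℝ) * x i) + (s k : ℝ) * T ≤ (b k : ℝ) ↔
          (∑ i, (t' k i : ℝ) * x i) + (c k : ℝ) ≤ T) := by
      intro k hk x T
      have hsneg : (s k : ℝ) < 0 := by exact_mod_cast hk
      have hsne : (s k : ℝ) ≠ 0 := ne_of_lt hsneg
      have hsum : (∑ i, (t' k i : ℝ) * x i) = (∑ i, (a k i : ℝ) * x i) * (-(s k : ℝ)⁻¹) := by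
        rw [Finset.sum_mul]
        apply Finset.sum_congr rfl
        intro i _
        simp only [ht', if_pos hk]
        push_cast
        field_simp
      have hcval : (c k : ℝ) = (b k : ℝ) / (s k : ℝ) := by
        simp only [hc, if_pos hk]
        push_cast
        ring
      rw [hsum, hcval]
      have heq : (∑ i, (a k i : ℝ) * x i) * (-(s k : ℝ)⁻¹) + (b k : ℝ) / (s k : ℝ)
          = ((b k : ℝ) - ∑ i, (a k i : ℝ) * x i) / (s k : ℝ) := by
        field_simp
        ring
      rw [heq, div_le_iff_of_neg hsneg]
      constructor <;> intro hle <;> nlinarith [hle]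
    -- key facts
    have hxe : ∀ x ∈ P, ∀ k, (∑ i, (a k i : ℝ) * x i) + (s k : ℝ) * h x ≤ (b k : ℝ) :=
      fun x hx => (hmem (x, h x)).mp ⟨hx, le_refl _⟩
    have hpieceLe : ∀ x ∈ P, ∀ k, (∑ i, (t' k i : ℝ) * x i) + (c k : ℝ) ≤ h x := by
      intro x hx k
      by_cases hk : s k < 0
      · exact (hℓ k hk x (h x)).mp (hxe x hx k)
      · have hswap : (∑ i, (t' k i : ℝ) * x i) + (c k : ℝ)
            = (∑ i, (t' k₀ i : ℝ) * x i) + (c k₀ : ℝ) := by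
          simp only [ht', hc, if_neg hk, if_pos hk₀lt]
        rw [hswap]
        exact (hℓ k₀ hk₀lt x (h x)).mp (hxe x hx k₀)
    have hub : ∀ x ∈ P, h x ≤ ⨆ k : Fin N, ((∑ i, (t' k i : ℝ) * x i) + (c k : ℝ)) := by
      intro x hx
      set T : ℝ := ⨆ k : Fin N, ((∑ i, (t' k i : ℝ) * x i) + (c k : ℝ)) with hT
      have hb : BddAbove (Set.range fun k : Fin N =>
          (∑ i, (t' k i : ℝ) * x i) + (c k : ℝ)) :=
        Set.Finite.bddAbove (Set.finite_range _)
      have : x ∈ P ∧ h x ≤ T := by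
        apply (hmem (x, T)).mpr
        intro k
        by_cases hk : s k < 0
        · exact (hℓ k hk x T).mpr (le_ciSup hb k)
        · have h0 : (s k : ℝ) = 0 := by
            have : (0 : ℝ) ≤ (s k : ℝ) := by exact_mod_cast not_lt.mp hk
            linarith [hs k]
          rw [h0]
          have := hxe x hx k
          rw [h0] at this
          simpa using this
      exact this.2
    -- nonpositive slopes
    have htneg : ∀ k i, t' k i ≤ 0 := by
      intro k i
      have key : ∀ l : Fin N, s l < 0 → t' l i ≤ 0 := by
        intro l hl
        -- the piece l is ≤ h on P; moving in direction e_i stays in P and decreases h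
        have hpiece : ∀ (lam : ℝ), 0 ≤ lam →
            (∑ j, (t' l j : ℝ) * x₀ j) + lam * (t' l i : ℝ) + (c l : ℝ) ≤ h x₀ := by
          intro lam hlam
          set y : Fin n → ℝ := fun j => x₀ j + if j = i then lam else 0 with hy
          have hyP : y ∈ P := by
            apply hPrec
            rw [Set.mem_add]
            refine ⟨x₀, hx₀, (fun j => if j = i then lam else 0), ?_, ?_⟩
            · intro j; dsimp only; split <;> simp [hlam]
            · funext j; simp [hy]
          have hxy : ∀ j, x₀ j ≤ y j := by
            intro j; simp only [hy]; split <;> simp [hlam]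
          have hsum : (∑ j, (t' l j : ℝ) * y j)
              = (∑ j, (t' l j : ℝ) * x₀ j) + lam * (t' l i : ℝ) := by
            simp only [hy, mul_add]
            rw [Finset.sum_add_distrib]
            congr 1
            rw [Finset.sum_eq_single i (fun j _ hj => by simp [hj])
              (fun hi => absurd (Finset.mem_univ i) hi)]
            simp [mul_comm]
          have hle := hpieceLe y hyP l
          rw [hsum] at hle
          calc (∑ j, (t' l j : ℝ) * x₀ j) + lam * (t' l i : ℝ) + (c l : ℝ)
              = (∑ j, (t' l j : ℝ) * x₀ j) + lam * (t' l i : ℝ) + (c l : ℝ) := rfl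
            _ ≤ h y := by linarith
            _ ≤ h x₀ := hmono x₀ hx₀ y hyP hxy
        by_contra hposq
        push_neg at hposq
        have hpos : (0 : ℝ) < (t' l i : ℝ) := by exact_mod_cast hposq
        set M : ℝ := h x₀ - ((∑ j, (t' l j : ℝ) * x₀ j) + (c l : ℝ)) with hM
        have hM0 : 0 ≤ M := by
          have := hpiece 0 le_rfl
          simp only [hM]
          linarith
        have hMle : ∀ lam : ℝ, 0 ≤ lam → lam * (t' l i : ℝ) ≤ M := by
          intro lam hlam
          have := hpiece lam hlam
          simp only [hM]
          linarith
        have h1 := hMle ((M + 1) / (t' l i : ℝ)) (by positivity)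
        rw [div_mul_cancel₀ _ (ne_of_gt hpos)] at h1
        linarith
      by_cases hk : s k < 0
      · exact key k hk
      · have : t' k i = t' k₀ i := by simp only [ht', if_neg hk, if_pos hk₀lt]
        rw [this]
        exact key k₀ hk₀lt
    refine ⟨N, k₀.pos, t', c, htneg, ?_⟩
    intro x hx
    exact le_antisymm (hub x hx) (ciSup_le fun k => hpieceLe x hx k)
  · rintro ⟨N, hN, t, b, hneg, hmax⟩
    obtain ⟨M, aP, bP, hP⟩ := hPpoly
    haveI : Nonempty (Fin N) := ⟨⟨0, hN⟩⟩
    refine ⟨M + N, Fin.addCases (fun j => aP j) (fun j => fun i => t j i),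
      Fin.addCases (fun _ => 0) (fun _ => -1),
      Fin.addCases (fun j => bP j) (fun j => -(b j)), ?_⟩
    ext p
    simp only [Set.mem_setOf_eq, Set.mem_iInter]
    constructor
    · rintro ⟨hp1, hp2⟩ k
      rw [hP] at hp1
      simp only [Set.mem_iInter, Set.mem_setOf_eq] at hp1
      have hle : ∀ j : Fin N, (∑ i, (t j i : ℝ) * p.1 i) + (b j : ℝ) ≤ p.2 := by
        intro j
        have hb : BddAbove (Set.range fun k : Fin N =>
            (∑ i, (t k i : ℝ) * p.1 i) + (b k : ℝ)) :=
          Set.Finite.bddAbove (Set.finite_range _)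
        have := le_ciSup hb j
        rw [← hmax p.1 (by rw [hP]; simpa [Set.mem_iInter] using hp1)] at this
        exact this.trans hp2
      induction k using Fin.addCases with
      | left j =>
        simp only [Fin.addCases_left]
        simpa using hp1 j
      | right j =>
        simp only [Fin.addCases_right]
        have := hle j
        push_cast
        linarith
    · intro hk
      have hp1 : p.1 ∈ P := by
        rw [hP]
        simp only [Set.mem_iInter, Set.mem_setOf_eq]
        intro j
        have := hk (Fin.castAdd N j)
        simpa [Fin.addCases_left] using this
      refine ⟨hp1, ?_⟩
      rw [hmax p.1 hp1]
      apply ciSup_le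
      intro j
      have := hk (Fin.natAdd M j)
      simp only [Fin.addCases_right] at this
      push_cast at this
      linarith
end

section
/- Let n be a positive integer and let Q ⊆ {x ∈ ℝⁿ : ∀i, xᵢ ≤ 0} be a nonempty H-polyhedron (not necessarily rational) such that Q + ℝⁿ_{≤0} ⊆ Q, and let g : ℝⁿ → ℝ be a function that is convex on Q and increasing in each variable on Q (if x, y ∈ Q with xᵢ ≤ yᵢ for all i, then g(x) ≤ g(y)). Then the following are equivalent: (1) the epigraph epi(g) = {(x,t) ∈ ℝⁿ × ℝ : x ∈ Q and t ≥ g(x)} is an H-polyhedron in ℝⁿ × ℝ; (2) there exist finitely many vectors s₁, …, s_N ∈ ℝⁿ with all components nonnegative and real numbers a₁, …, a_N such that g(x) = max_{1≤i≤N} (⟨sᵢ,x⟩ + aᵢ) for all x ∈ Q. -/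
open Pointwise

/-- An H-polyhedron in `ℝⁿ`: a finite intersection of closed half-spaces
`{x : ⟨a,x⟩ ≤ b}` with real normal vectors `a` and real constants `b`. -/
def IsHPolyhedron (n : ℕ) (Q : Set (Fin n → ℝ)) : Prop :=
  ∃ (N : ℕ) (a : Fin N → Fin n → ℝ) (b : Fin N → ℝ),
    Q = ⋂ k : Fin N, {x : Fin n → ℝ | ∑ i, a k i * x i ≤ b k}

/-- An H-polyhedron in `ℝⁿ × ℝ`: a finite intersection of closed half-spaces
`{(x,t) : ⟨a,x⟩ + s·t ≤ b}` with `a ∈ ℝⁿ` and `s, b ∈ ℝ`. -/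
def IsHPolyhedronProd (n : ℕ) (S : Set ((Fin n → ℝ) × ℝ)) : Prop :=
  ∃ (N : ℕ) (a : Fin N → Fin n → ℝ) (s : Fin N → ℝ) (b : Fin N → ℝ),
    S = ⋂ k : Fin N, {p : (Fin n → ℝ) × ℝ |
      (∑ i, a k i * p.1 i) + s k * p.2 ≤ b k}

/-- For a nonempty (not necessarily rational) H-polyhedron `Q ⊆ ℝⁿ_{≤0}`
with `Q + ℝⁿ_{≤0} ⊆ Q` and `g` convex on `Q` and increasing in each variable on `Q`,
the epigraph of `g` (over `Q`) is an H-polyhedron iff `g` is, on `Q`, a finite maximum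
of affine functions with nonnegative slopes. -/
theorem epigraph_hPolyhedron_iff_maxAffine (n : ℕ) (hn : 0 < n)
    (Q : Set (Fin n → ℝ)) (hQne : Q.Nonempty)
    (hQsub : Q ⊆ {x : Fin n → ℝ | ∀ i, x i ≤ 0})
    (hQpoly : IsHPolyhedron n Q)
    (hQrec : Q + {q : Fin n → ℝ | ∀ i, q i ≤ 0} ⊆ Q)
    (g : (Fin n → ℝ) → ℝ)
    (hconv : ConvexOn ℝ Q g)
    (hmono : ∀ x ∈ Q, ∀ y ∈ Q, (∀ i, x i ≤ y i) → g x ≤ g y) :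
    IsHPolyhedronProd n {p : (Fin n → ℝ) × ℝ | p.1 ∈ Q ∧ g p.1 ≤ p.2} ↔
    ∃ (N : ℕ) (_ : 0 < N) (s : Fin N → Fin n → ℝ) (a : Fin N → ℝ),
      (∀ k i, 0 ≤ s k i) ∧
      ∀ x ∈ Q, g x = ⨆ k : Fin N, ((∑ i, s k i * x i) + a k) := by
  classical
  constructor
  · rintro ⟨N, a, s, b, hS⟩
    obtain ⟨x₀, hx₀⟩ := hQne
    have hmem : ∀ p : (Fin n → ℝ) × ℝ, (p.1 ∈ Q ∧ g p.1 ≤ p.2) ↔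
        ∀ k, (∑ i, a k i * p.1 i) + s k * p.2 ≤ b k := by
      intro p
      have := Set.ext_iff.mp hS p
      simpa [Set.mem_iInter] using this
    -- every s k is nonpositive
    have hsle : ∀ k, s k ≤ 0 := by
      intro k
      by_contra h
      push_neg at h
      set A := ∑ i, a k i * x₀ i with hA
      have h1 : (x₀, max (g x₀) ((b k - A) / s k + 1)) ∈
          ({p : (Fin n → ℝ) × ℝ | p.1 ∈ Q ∧ g p.1 ≤ p.2}) :=
        ⟨hx₀, le_max_left _ _⟩
      have h2 := (hmem _).1 h1 k
      simp only at h2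
      have h3 : (b k - A) / s k + 1 ≤ max (g x₀) ((b k - A) / s k + 1) :=
        le_max_right _ _
      have h4 : (b k - A) / s k < max (g x₀) ((b k - A) / s k + 1) := by linarith
      have h5 : b k - A < max (g x₀) ((b k - A) / s k + 1) * s k :=
        (div_lt_iff₀ h).1 h4
      nlinarith
    have hconstr : ∀ x ∈ Q, ∀ k, (∑ i, a k i * x i) + s k * g x ≤ b k := by
      intro x hx k
      exact (hmem (x, g x)).1 ⟨hx, le_rfl⟩ k
    set T : Finset (Fin N) := Finset.univ.filter (fun k => s k < 0) with hT
    have hTmem : ∀ k, k ∈ T ↔ s k < 0 := by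
      intro k; simp [hT]
    have hTne : T.Nonempty := by
      by_contra hne
      have hz : ∀ k, s k = 0 := by
        intro k
        rcases lt_or_eq_of_le (hsle k) with h | h
        · exact absurd ((hTmem k).2 h) (fun hh => hne ⟨k, hh⟩)
        · exact h
      have : (x₀, g x₀ - 1) ∈ ({p : (Fin n → ℝ) × ℝ | p.1 ∈ Q ∧ g p.1 ≤ p.2}) := by
        refine (hmem _).2 ?_
        intro k
        have := hconstr x₀ hx₀ k
        simp only [hz k, zero_mul] at this ⊢
        exact this
      have := this.2
      simp only at this
      linarith
    set aff : Fin N → (Fin n → ℝ) → ℝ :=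
      fun k x => ((∑ i, a k i * x i) - b k) / (-s k) with haffdef
    have haff : ∀ k, s k < 0 → ∀ (x : Fin n → ℝ) (t : ℝ),
        ((∑ i, a k i * x i) + s k * t ≤ b k ↔ aff k x ≤ t) := by
      intro k hk x t
      have hpos : 0 < -s k := by linarith
      rw [haffdef]
      simp only
      rw [div_le_iff₀ hpos]
      constructor <;> intro h <;> nlinarith
    -- g is the max of the aff k over T
    have hgeq : ∀ x ∈ Q, g x = T.sup' hTne (fun k => aff k x) := by
      intro x hx
      apply le_antisymm
      · set t := T.sup' hTne (fun k => aff k x) with ht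
        have : (x, t) ∈ ({p : (Fin n → ℝ) × ℝ | p.1 ∈ Q ∧ g p.1 ≤ p.2}) := by
          refine (hmem _).2 ?_
          intro k
          rcases lt_or_eq_of_le (hsle k) with h | h
          · exact (haff k h x t).2 (Finset.le_sup' (fun k => aff k x) ((hTmem k).2 h))
          · have := hconstr x hx k
            rw [h] at this ⊢
            simp only [zero_mul, add_zero] at this ⊢
            exact this
        exact this.2
      · refine Finset.sup'_le _ _ ?_
        intro k hk
        exact (haff k ((hTmem k).1 hk) x (g x)).1 (hconstr x hx k)
    -- the maximizing piece has nonnegative slopes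
    have hgood : ∀ x ∈ Q, ∃ k, s k < 0 ∧ (∀ i, 0 ≤ a k i) ∧ aff k x = g x := by
      intro x hx
      obtain ⟨k, hkT, hk⟩ := T.exists_mem_eq_sup' hTne (fun k => aff k x)
      have hks : s k < 0 := (hTmem k).1 hkT
      refine ⟨k, hks, ?_, by rw [hgeq x hx, hk]⟩
      intro i
      by_contra hai
      push_neg at hai
      set q : Fin n → ℝ := fun j => if j = i then (-1 : ℝ) else 0 with hq
      have hqle : ∀ j, q j ≤ 0 := by
        intro j; rw [hq]; dsimp only; split <;> norm_num
      have hyQ : x + q ∈ Q := hQrec (Set.add_mem_add hx hqle)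
      have hyx : ∀ j, (x + q) j ≤ x j := by
        intro j
        have := hqle j
        simp only [Pi.add_apply]
        linarith
      have hgy : g (x + q) ≤ g x := hmono _ hyQ _ hx hyx
      have haffy : aff k (x + q) ≤ g (x + q) :=
        (haff k hks _ (g (x + q))).1 (hconstr _ hyQ k)
      have hsum : (∑ j, a k j * (x + q) j) = (∑ j, a k j * x j) - a k i := by
        have : ∀ j, a k j * (x + q) j = a k j * x j + (if j = i then -a k j else 0) := by
          intro j
          simp only [Pi.add_apply, hq]
          split <;> ring
        rw [Finset.sum_congr rfl (fun j _ => this j), Finset.sum_add_distrib,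
          Finset.sum_ite_eq' Finset.univ i (fun j => -a k j)]
        simp
        ring
      have haffy2 : aff k (x + q) = aff k x + a k i / s k := by
        rw [haffdef]
        simp only
        rw [hsum]
        have h1 : (∑ j, a k j * x j) - a k i - b k =
            ((∑ j, a k j * x j) - b k) + (-a k i) := by ring
        rw [h1, add_div, neg_div_neg_eq]
      have hpos : 0 < a k i / s k := div_pos_of_neg_of_neg hai hks
      have hle : aff k x = g x := by rw [hgeq x hx, hk]
      linarith [haffy, haffy2, hgy, hle, hpos]
    obtain ⟨k₁, hk₁s, hk₁nn, _⟩ := hgood x₀ hx₀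
    have hNpos : 0 < N := k₁.pos
    set Good : Fin N → Prop := fun k => s k < 0 ∧ ∀ i, 0 ≤ a k i with hGood
    set s' : Fin N → Fin n → ℝ := fun k =>
      if Good k then (fun i => a k i / (-s k)) else (fun i => a k₁ i / (-s k₁)) with hs'
    set c' : Fin N → ℝ := fun k =>
      if Good k then b k / s k else b k₁ / s k₁ with hc'
    have key : ∀ k, Good k → ∀ x, (∑ i, (a k i / (-s k)) * x i) + b k / s k = aff k x := by
      intro k hk x
      have hne : s k ≠ 0 := ne_of_lt hk.1
      rw [haffdef]
      simp only
      rw [Finset.sum_congr rfl (fun i _ => div_mul_eq_mul_div (a k i) (-s k) (x i)),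
        ← Finset.sum_div]
      have h1 : b k / s k = (-b k) / (-s k) := by rw [neg_div_neg_eq]
      rw [h1, ← add_div, sub_eq_add_neg]
    have hform : ∀ k x, (∑ i, s' k i * x i) + c' k =
        if Good k then aff k x else aff k₁ x := by
      intro k x
      rw [hs', hc']
      simp only
      split
      · rename_i h; exact key k h x
      · exact key k₁ ⟨hk₁s, hk₁nn⟩ x
    refine ⟨N, hNpos, s', c', ?_, ?_⟩
    · intro k i
      rw [hs']
      simp only
      split
      · rename_i h
        exact div_nonneg (h.2 i) (by linarith [h.1])
      · exact div_nonneg (hk₁nn i) (by linarith [hk₁s])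
    · intro x hx
      haveI : Nonempty (Fin N) := ⟨k₁⟩
      have hub : ∀ k, (∑ i, s' k i * x i) + c' k ≤ g x := by
        intro k
        rw [hform]
        split
        · rename_i h
          exact (haff k h.1 x (g x)).1 (hconstr x hx k)
        · exact (haff k₁ hk₁s x (g x)).1 (hconstr x hx k₁)
      obtain ⟨k, hks, hknn, hkeq⟩ := hgood x hx
      have hkG : Good k := ⟨hks, hknn⟩
      apply le_antisymm
      · calc g x = (∑ i, s' k i * x i) + c' k := by
              rw [hform, if_pos hkG, hkeq]
          _ ≤ ⨆ k : Fin N, ((∑ i, s' k i * x i) + c' k) :=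
              le_ciSup (f := fun k => (∑ i, s' k i * x i) + c' k)
                (Set.Finite.bddAbove (Set.finite_range _)) k
      · exact ciSup_le hub
  · rintro ⟨N, hN, s, c, hsnn, hg⟩
    obtain ⟨M, A, B, hQ⟩ := hQpoly
    haveI : Nonempty (Fin N) := ⟨⟨0, hN⟩⟩
    refine ⟨M + N, fun k => Sum.elim A s (finSumFinEquiv.symm k),
      fun k => Sum.elim (fun _ => (0 : ℝ)) (fun _ => (-1 : ℝ)) (finSumFinEquiv.symm k),
      fun k => Sum.elim B (fun j => -(c j)) (finSumFinEquiv.symm k), ?_⟩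
    ext p
    simp only [Set.mem_iInter, Set.mem_setOf_eq]
    have hsplit : ∀ (P : Fin (M + N) → Prop), (∀ k, P k) ↔
        (∀ j : Fin M ⊕ Fin N, P (finSumFinEquiv j)) :=
      fun P => ⟨fun h j => h _, fun h k => by
        simpa using h (finSumFinEquiv.symm k)⟩
    rw [hsplit, Sum.forall]
    simp only [Equiv.symm_apply_apply, Sum.elim_inl, Sum.elim_inr]
    have hQmem : p.1 ∈ Q ↔ ∀ i : Fin M, ∑ j, A i j * p.1 j ≤ B i := by
      rw [hQ]
      simp [Set.mem_iInter]
    constructor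
    · rintro ⟨hxQ, hgt⟩
      constructor
      · intro i
        have := hQmem.1 hxQ i
        simpa using this
      · intro j
        have h1 : (∑ i, s j i * p.1 i) + c j ≤ g p.1 := by
          rw [hg p.1 hxQ]
          exact le_ciSup (f := fun k => (∑ i, s k i * p.1 i) + c k)
            (Set.Finite.bddAbove (Set.finite_range _)) j
        linarith
    · rintro ⟨hL, hR⟩
      have hxQ : p.1 ∈ Q := hQmem.2 (fun i => by simpa using hL i)
      refine ⟨hxQ, ?_⟩
      rw [hg p.1 hxQ]
      refine ciSup_le ?_
      intro j
      have := hR j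
      linarith
end

section
/- Let n be a positive integer and let Q ⊆ {x ∈ ℝⁿ : ∀i, xᵢ ≤ 0} be a nonempty rational H-polyhedron such that Q + ℝⁿ_{≤0} ⊆ Q. Let s₁, …, s_N ∈ ℚⁿ have all components nonnegative, let a₁, …, a_N ∈ ℚ, and define g : Q → ℝ by g(x) = max_{1≤i≤N} (⟨sᵢ,x⟩ + aᵢ); assume g is increasing in each variable on Q. Let h be the convex conjugate of g (with g extended by +∞ outside Q), i.e., for x ∈ ℝⁿ, h(x) = sup_{y∈Q} (⟨x,y⟩ − g(y)), with domain D = {x : this supremum is finite}. Then the epigraph epi(h) = {(x,t) ∈ ℝⁿ × ℝ : x ∈ D and t ≥ h(x)} is a rational V-polyhedron in ℝⁿ × ℝ: there exist finite sets Y ⊆ ℚⁿ × ℚ and V ⊆ ℚⁿ × ℚ such that epi(h) = convexHull(Y) + cone(V), where cone(V) is the set of all finite nonnegative linear combinations of elements of V. -/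
open Pointwise

/-- The canonical map from a rational point of `ℚⁿ × ℚ` to `ℝⁿ × ℝ`. -/
def ratToReal {n : ℕ} (p : (Fin n → ℚ) × ℚ) : (Fin n → ℝ) × ℝ :=
  (fun i => (p.1 i : ℝ), (p.2 : ℝ))

open Finset

theorem farkas_linear {E : Type*} [AddCommGroup E] [Module ℝ E] :
    ∀ (m : ℕ) (A : Fin m → E →ₗ[ℝ] ℝ) (c : E →ₗ[ℝ] ℝ),
      (∀ x, (∀ i, A i x ≤ 0) → c x ≤ 0) →
      ∃ μ : Fin m → ℝ, (∀ i, 0 ≤ μ i) ∧ ∀ z, c z = ∑ i, μ i * A i z := by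
  intro m
  induction m with
  | zero =>
    intro A c H
    refine ⟨0, fun i => le_rfl, fun z => ?_⟩
    have h1 : c z ≤ 0 := H z (fun i => i.elim0)
    have h2 : c (-z) ≤ 0 := H (-z) (fun i => i.elim0)
    simp only [map_neg] at h2
    simp only [Finset.univ_eq_empty, Finset.sum_empty]
    linarith
  | succ m IH =>
    intro A c H
    by_cases hcase : ∀ x, (∀ i : Fin m, A i.castSucc x ≤ 0) → c x ≤ 0
    · obtain ⟨ν, hν0, hν⟩ := IH (fun i => A i.castSucc) c hcase
      refine ⟨Fin.snoc ν 0, ?_, fun z => ?_⟩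
      · intro i
        refine Fin.lastCases ?_ ?_ i
        · simp
        · intro j; simp [hν0 j]
      · rw [Fin.sum_univ_castSucc]
        simp [hν z]
    · push_neg at hcase
      obtain ⟨x, hx, hcx⟩ := hcase
      have hAm : 0 < A (Fin.last m) x := by
        by_contra hle
        rw [not_lt] at hle
        have : ∀ i : Fin (m + 1), A i x ≤ 0 := by
          intro i
          refine Fin.lastCases ?_ ?_ i
          · exact hle
          · exact hx
        linarith [H x this]
      set r : ℝ := (A (Fin.last m) x)⁻¹ with hr
      have hr0 : 0 < r := inv_pos.2 hAm
      set xh : E := r • x with hxh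
      have hxh1 : A (Fin.last m) xh = 1 := by
        simp [hxh, hr, inv_mul_cancel₀ (ne_of_gt hAm)]
      have hxhle : ∀ i : Fin m, A i.castSucc xh ≤ 0 := by
        intro i
        simp only [hxh, map_smul, smul_eq_mul]
        exact mul_nonpos_of_nonneg_of_nonpos hr0.le (hx i)
      have hcxh : 0 < c xh := by
        simp only [hxh, map_smul, smul_eq_mul]
        exact mul_pos hr0 hcx
      -- apply IH to modified functionals
      have hside : ∀ z, (∀ i : Fin m,
          (A i.castSucc - (A i.castSucc xh) • A (Fin.last m)) z ≤ 0) →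
          (c - (c xh) • A (Fin.last m)) z ≤ 0 := by
        intro z hz
        have hAz : ∀ i : Fin (m + 1), A i (z - (A (Fin.last m) z) • xh) ≤ 0 := by
          intro i
          refine Fin.lastCases ?_ ?_ i
          · simp [map_sub, map_smul, smul_eq_mul, hxh1]
          · intro j
            have := hz j
            simp only [LinearMap.sub_apply, LinearMap.smul_apply, smul_eq_mul] at this
            simp only [map_sub, map_smul, smul_eq_mul]
            linarith
        have := H _ hAz
        simp only [map_sub, map_smul, smul_eq_mul] at this
        simp only [LinearMap.sub_apply, LinearMap.smul_apply, smul_eq_mul]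
        linarith
      obtain ⟨ν, hν0, hν⟩ := IH
        (fun i => A i.castSucc - (A i.castSucc xh) • A (Fin.last m))
        (c - (c xh) • A (Fin.last m)) hside
      refine ⟨Fin.snoc ν (c xh - ∑ i, ν i * A i.castSucc xh), ?_, fun z => ?_⟩
      · intro i
        refine Fin.lastCases ?_ ?_ i
        · simp only [Fin.snoc_last]
          have : ∑ i, ν i * A i.castSucc xh ≤ 0 :=
            Finset.sum_nonpos fun i _ =>
              mul_nonpos_of_nonneg_of_nonpos (hν0 i) (hxhle i)
          linarith
        · intro j; simp [hν0 j]
      · have key := hν z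
        simp only [LinearMap.sub_apply, LinearMap.smul_apply, smul_eq_mul] at key
        rw [Fin.sum_univ_castSucc]
        simp only [Fin.snoc_castSucc, Fin.snoc_last]
        have expand : ∑ i : Fin m, ν i * (A i.castSucc z - A i.castSucc xh * A (Fin.last m) z)
            = ∑ i : Fin m, ν i * A i.castSucc z
              - (∑ i : Fin m, ν i * A i.castSucc xh) * A (Fin.last m) z := by
          rw [Finset.sum_mul, ← Finset.sum_sub_distrib]
          congr 1; ext i; ring
        rw [expand] at key
        have hring : (c xh - ∑ i, ν i * A i.castSucc xh) * A (Fin.last m) z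
            = c xh * A (Fin.last m) z
              - (∑ i, ν i * A i.castSucc xh) * A (Fin.last m) z := by ring
        rw [hring]
        linarith

theorem farkas_affine {E : Type*} [AddCommGroup E] [Module ℝ E]
    (m : ℕ) (A : Fin m → E →ₗ[ℝ] ℝ) (b : Fin m → ℝ) (c : E →ₗ[ℝ] ℝ) (d : ℝ)
    (hfeas : ∃ y, ∀ i, A i y ≤ b i)
    (H : ∀ y, (∀ i, A i y ≤ b i) → c y ≤ d) :
    ∃ μ : Fin m → ℝ, (∀ i, 0 ≤ μ i) ∧ (∀ z, c z = ∑ i, μ i * A i z) ∧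
      ∑ i, μ i * b i ≤ d := by
  set F : Fin (m + 1) → (E × ℝ) →ₗ[ℝ] ℝ :=
    Fin.snoc (fun i => (A i).comp (LinearMap.fst ℝ E ℝ) - b i • LinearMap.snd ℝ E ℝ)
      (-(LinearMap.snd ℝ E ℝ)) with hF
  set G : (E × ℝ) →ₗ[ℝ] ℝ := c.comp (LinearMap.fst ℝ E ℝ) - d • LinearMap.snd ℝ E ℝ with hG
  have hFcast : ∀ (i : Fin m) (p : E × ℝ), F i.castSucc p = A i p.1 - b i * p.2 := by
    intro i p
    simp [hF, Fin.snoc_castSucc]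
  have hFlast : ∀ p : E × ℝ, F (Fin.last m) p = -p.2 := by
    intro p; simp [hF, Fin.snoc_last]
  have hGp : ∀ p : E × ℝ, G p = c p.1 - d * p.2 := by
    intro p; simp [hG]
  have Hlin : ∀ p : E × ℝ, (∀ i, F i p ≤ 0) → G p ≤ 0 := by
    rintro ⟨y, w⟩ hp
    have hw : 0 ≤ w := by have := hp (Fin.last m); rw [hFlast] at this; linarith
    have hAyw : ∀ i : Fin m, A i y ≤ b i * w := by
      intro i; have := hp i.castSucc; rw [hFcast] at this; linarith
    rw [hGp]
    rcases eq_or_lt_of_le hw with hw0 | hw0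
    · -- w = 0
      obtain ⟨y₀, hy₀⟩ := hfeas
      have hcy0 : c y₀ ≤ d := H y₀ hy₀
      have hAy : ∀ i, A i y ≤ 0 := by
        intro i; have := hAyw i; rw [← hw0] at this; linarith
      have hcy : c y ≤ 0 := by
        by_contra hpos
        push_neg at hpos
        set t : ℝ := (d - c y₀ + 1) / (c y) with ht
        have ht0 : 0 ≤ t := div_nonneg (by linarith) hpos.le
        have hyt : ∀ i, A i (y₀ + t • y) ≤ b i := by
          intro i
          have : A i (y₀ + t • y) = A i y₀ + t * A i y := by simp [smul_eq_mul]
          rw [this]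
          have : t * A i y ≤ 0 := mul_nonpos_of_nonneg_of_nonpos ht0 (hAy i)
          linarith [hy₀ i]
        have := H _ hyt
        rw [map_add, map_smul, smul_eq_mul, ht,
          div_mul_cancel₀ _ (ne_of_gt hpos)] at this
        linarith
      rw [← hw0, mul_zero, sub_zero]
      exact hcy
    · -- w > 0
      have := H (w⁻¹ • y) (by
        intro i
        rw [map_smul, smul_eq_mul]
        rw [inv_mul_le_iff₀ hw0]
        linarith [hAyw i])
      rw [map_smul, smul_eq_mul, inv_mul_le_iff₀ hw0] at this
      simp only []
      linarith
  obtain ⟨μ', hμ'0, hμ'⟩ := farkas_linear (m + 1) F G Hlin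
  refine ⟨fun i => μ' i.castSucc, fun i => hμ'0 _, ?_, ?_⟩
  · intro z
    have := hμ' (z, 0)
    rw [hGp] at this
    rw [Fin.sum_univ_castSucc] at this
    simp only [hFlast] at this
    have heq : ∀ i : Fin m, μ' i.castSucc * F i.castSucc (z, 0)
        = μ' i.castSucc * A i z := by
      intro i; rw [hFcast]; ring_nf
    rw [Finset.sum_congr rfl (fun i _ => heq i)] at this
    simpa using this
  · have := hμ' (0, 1)
    rw [hGp] at this
    rw [Fin.sum_univ_castSucc] at this
    simp only [hFlast] at this
    have heq : ∀ i : Fin m, μ' i.castSucc * F i.castSucc ((0 : E), (1 : ℝ))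
        = -(μ' i.castSucc * b i) := by
      intro i; rw [hFcast]; simp
    rw [Finset.sum_congr rfl (fun i _ => heq i)] at this
    rw [Finset.sum_neg_distrib] at this
    simp at this
    have hlast := hμ'0 (Fin.last m)
    linarith

/-- Dot product with the first component, as a linear map on `ℝⁿ × ℝ`. -/
def dotL {n : ℕ} (v : Fin n → ℝ) : ((Fin n → ℝ) × ℝ) →ₗ[ℝ] ℝ where
  toFun p := ∑ i, v i * p.1 i
  map_add' p q := by
    simp only [Prod.fst_add, Pi.add_apply, mul_add, Finset.sum_add_distrib]
  map_smul' r p := by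
    simp only [Prod.smul_fst, Pi.smul_apply, smul_eq_mul, RingHom.id_apply, Finset.mul_sum]
    exact Finset.sum_congr rfl fun i _ => by ring

theorem dotL_apply {n : ℕ} (v : Fin n → ℝ) (p : (Fin n → ℝ) × ℝ) :
    dotL v p = ∑ i, v i * p.1 i := rfl

theorem dotL_single {n : ℕ} (v : Fin n → ℝ) (i : Fin n) (u : ℝ) :
    dotL v (Pi.single i 1, u) = v i := by
  classical
  rw [dotL_apply]
  rw [Finset.sum_eq_single i]
  · simp
  · intro j _ hj; simp [Pi.single_apply, hj]
  · simp

theorem sum_smul_pair_fst {M n : ℕ} (w : Fin M → ℝ) (F : Fin M → (Fin n → ℝ) × ℝ) (i : Fin n) :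
    (∑ k, w k • F k).1 i = ∑ k, w k * (F k).1 i := by
  rw [Prod.fst_sum]
  rw [Finset.sum_apply]
  exact Finset.sum_congr rfl fun k _ => rfl

theorem sum_smul_pair_snd {M n : ℕ} (w : Fin M → ℝ) (F : Fin M → (Fin n → ℝ) × ℝ) :
    (∑ k, w k • F k).2 = ∑ k, w k * (F k).2 := by
  rw [Prod.snd_sum]
  exact Finset.sum_congr rfl fun k _ => rfl

theorem sum_mul_single {n : ℕ} (v : Fin n → ℝ) (i₀ : Fin n) :
    ∑ i, v i * (Pi.single i₀ 1 : Fin n → ℝ) i = v i₀ := by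
  classical
  rw [Finset.sum_eq_single i₀]
  · simp
  · intro j _ hj; simp [Pi.single_apply, hj]
  · simp

/-- Let `Q ⊆ ℝⁿ_{≤0}` be a nonempty rational H-polyhedron with
`Q + ℝⁿ_{≤0} ⊆ Q`, and let `g(x) = max_k (⟨s_k,x⟩ + a_k)` on `Q` with rational
nonnegative slopes `s_k` and rational constants `a_k`, increasing in each variable
on `Q`. Then the epigraph of the convex conjugate
`h(x) = sup_{y ∈ Q} (⟨x,y⟩ − g(y))` (over its finiteness domain `D`) is a rational
V-polyhedron: `convexHull(Y) + cone(V)` for finite rational sets `Y`, `V`. -/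
theorem epigraph_conjugate_ratVPolyhedron (n : ℕ) (hn : 0 < n)
    (Q : Set (Fin n → ℝ)) (hQne : Q.Nonempty)
    (hQsub : Q ⊆ {x : Fin n → ℝ | ∀ i, x i ≤ 0})
    (hQpoly : IsRatHPolyhedron n Q)
    (hQrec : Q + {q : Fin n → ℝ | ∀ i, q i ≤ 0} ⊆ Q)
    (N : ℕ) (hN : 0 < N) (s : Fin N → Fin n → ℚ) (a : Fin N → ℚ)
    (hs : ∀ k i, 0 ≤ s k i)
    (g : (Fin n → ℝ) → ℝ)
    (hg : ∀ x ∈ Q, g x = ⨆ k : Fin N, ((∑ i, (s k i : ℝ) * x i) + (a k : ℝ)))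
    (hmono : ∀ x ∈ Q, ∀ y ∈ Q, (∀ i, x i ≤ y i) → g x ≤ g y)
    (D : Set (Fin n → ℝ))
    (hD : D = {x : Fin n → ℝ | BddAbove ((fun y => (∑ i, x i * y i) - g y) '' Q)})
    (h : (Fin n → ℝ) → ℝ)
    (hh : ∀ x ∈ D, h x = sSup ((fun y => (∑ i, x i * y i) - g y) '' Q)) :
    ∃ (M K : ℕ) (Y : Fin M → (Fin n → ℚ) × ℚ) (V : Fin K → (Fin n → ℚ) × ℚ),
      {p : (Fin n → ℝ) × ℝ | p.1 ∈ D ∧ h p.1 ≤ p.2} =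
        convexHull ℝ (Set.range fun m => ratToReal (Y m)) +
        {z : (Fin n → ℝ) × ℝ | ∃ c : Fin K → ℝ,
          (∀ k, 0 ≤ c k) ∧ z = ∑ k : Fin K, c k • ratToReal (V k)} := by
  classical
  obtain ⟨NA, α, β, hQeq⟩ := hQpoly
  haveI : Nonempty (Fin N) := ⟨⟨0, hN⟩⟩
  have hQmem : ∀ y, y ∈ Q ↔ ∀ j : Fin NA, ∑ i, (α j i : ℝ) * y i ≤ (β j : ℝ) := by
    intro y; rw [hQeq]; simp [Set.mem_iInter]
  set W : Fin (NA + 1) → (Fin n → ℚ) × ℚ :=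
    Fin.snoc (fun j => (α j, β j)) ((0 : Fin n → ℚ), (1 : ℚ)) with hW
  refine ⟨N, NA + 1, (fun k => (s k, -(a k))), W, ?_⟩
  ext p
  obtain ⟨x, t⟩ := p
  simp only [Set.mem_setOf_eq, Set.mem_add]
  constructor
  · -- hard direction, via Farkas
    rintro ⟨hxD, hxt⟩
    have hxD' := hxD
    rw [hD] at hxD'
    have hsup : ∀ y ∈ Q, (∑ i, x i * y i) - g y ≤ t := by
      intro y hy
      have h1 : (∑ i, x i * y i) - g y ≤ sSup ((fun y => (∑ i, x i * y i) - g y) '' Q) :=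
        le_csSup hxD' ⟨y, hy, rfl⟩
      rw [← hh x hxD] at h1
      linarith
    set A : Fin (NA + N) → ((Fin n → ℝ) × ℝ) →ₗ[ℝ] ℝ :=
      Fin.addCases (fun j => dotL (fun i => (α j i : ℝ)))
        (fun k => LinearMap.snd ℝ (Fin n → ℝ) ℝ - dotL (fun i => x i - (s k i : ℝ))) with hA
    set bb : Fin (NA + N) → ℝ :=
      Fin.addCases (fun j => (β j : ℝ)) (fun k => -(a k : ℝ)) with hbb
    have hAleft : ∀ (j : Fin NA) (p : (Fin n → ℝ) × ℝ),
        A (Fin.castAdd N j) p = ∑ i, (α j i : ℝ) * p.1 i := by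
      intro j p; simp only [hA, Fin.addCases_left]; rfl
    have hAright : ∀ (k : Fin N) (p : (Fin n → ℝ) × ℝ),
        A (Fin.natAdd NA k) p = p.2 - ∑ i, (x i - (s k i : ℝ)) * p.1 i := by
      intro k p; simp only [hA, Fin.addCases_right]; rfl
    have hbleft : ∀ j : Fin NA, bb (Fin.castAdd N j) = (β j : ℝ) := by
      intro j; simp only [hbb, Fin.addCases_left]
    have hbright : ∀ k : Fin N, bb (Fin.natAdd NA k) = -(a k : ℝ) := by
      intro k; simp only [hbb, Fin.addCases_right]
    have Hyp : ∀ p : (Fin n → ℝ) × ℝ, (∀ i, A i p ≤ bb i) →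
        (LinearMap.snd ℝ (Fin n → ℝ) ℝ) p ≤ t := by
      intro p hp
      have hyQ : p.1 ∈ Q := by
        rw [hQmem]
        intro j
        have hj := hp (Fin.castAdd N j)
        rw [hAleft, hbleft] at hj
        exact hj
      have hgle : g p.1 ≤ (∑ i, x i * p.1 i) - p.2 := by
        rw [hg p.1 hyQ]
        refine ciSup_le fun k => ?_
        have hc := hp (Fin.natAdd NA k)
        rw [hAright, hbright] at hc
        have hsplit : ∑ i, (x i - (s k i : ℝ)) * p.1 i
            = (∑ i, x i * p.1 i) - ∑ i, (s k i : ℝ) * p.1 i := by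
          rw [← Finset.sum_sub_distrib]
          exact Finset.sum_congr rfl fun i _ => by ring
        rw [hsplit] at hc
        linarith
      have := hsup p.1 hyQ
      simp only [LinearMap.snd_apply]
      linarith
    obtain ⟨y₀, hy₀⟩ := hQne
    set u₀ : ℝ := ⨅ k : Fin N, ((∑ i, (x i - (s k i : ℝ)) * y₀ i) - (a k : ℝ)) with hu₀
    have hfeas : ∃ p : (Fin n → ℝ) × ℝ, ∀ i, A i p ≤ bb i := by
      refine ⟨(y₀, u₀), ?_⟩
      intro i
      refine Fin.addCases (motive := fun i => A i (y₀, u₀) ≤ bb i) ?_ ?_ i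
      · intro j
        rw [hAleft, hbleft]
        exact (hQmem y₀).1 hy₀ j
      · intro k
        rw [hAright, hbright]
        have hile := ciInf_le
          (f := fun k : Fin N => (∑ i, (x i - (s k i : ℝ)) * y₀ i) - (a k : ℝ))
          (Set.Finite.bddBelow (Set.finite_range _)) k
        rw [← hu₀] at hile
        have : ((y₀, u₀) : (Fin n → ℝ) × ℝ).2 = u₀ := rfl
        rw [this]
        have : ((y₀, u₀) : (Fin n → ℝ) × ℝ).1 = y₀ := rfl
        rw [this]
        linarith
    obtain ⟨μ, hμ0, hμeq, hμb⟩ := farkas_affine (NA + N) A bb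
      (LinearMap.snd ℝ (Fin n → ℝ) ℝ) t hfeas Hyp
    set lam : Fin N → ℝ := fun k => μ (Fin.natAdd NA k) with hlam
    set mu : Fin NA → ℝ := fun j => μ (Fin.castAdd N j) with hmu
    have hsum1 : ∑ k, lam k = 1 := by
      have hE := hμeq ((0 : Fin n → ℝ), (1 : ℝ))
      rw [Fin.sum_univ_add] at hE
      have e1 : ∀ j : Fin NA,
          μ (Fin.castAdd N j) * A (Fin.castAdd N j) ((0 : Fin n → ℝ), (1:ℝ)) = 0 := by
        intro j; rw [hAleft]; simp
      have e2 : ∀ k : Fin N,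
          μ (Fin.natAdd NA k) * A (Fin.natAdd NA k) ((0 : Fin n → ℝ), (1:ℝ)) = lam k := by
        intro k; rw [hAright]; simp [hlam]
      rw [Finset.sum_congr rfl (fun j _ => e1 j),
        Finset.sum_congr rfl (fun k _ => e2 k)] at hE
      simpa using hE.symm
    have hx_eq : ∀ i₀, x i₀ = (∑ k, lam k * (s k i₀ : ℝ)) + ∑ j, mu j * (α j i₀ : ℝ) := by
      intro i₀
      have hE := hμeq (Pi.single i₀ 1, 0)
      rw [Fin.sum_univ_add] at hE
      have e1 : ∀ j : Fin NA,
          μ (Fin.castAdd N j) * A (Fin.castAdd N j) (Pi.single i₀ 1, 0)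
            = mu j * (α j i₀ : ℝ) := by
        intro j; rw [hAleft]
        simp only [sum_mul_single, hmu]
      have e2 : ∀ k : Fin N,
          μ (Fin.natAdd NA k) * A (Fin.natAdd NA k) (Pi.single i₀ 1, 0)
            = lam k * (0 - (x i₀ - (s k i₀ : ℝ))) := by
        intro k; rw [hAright]
        simp only [sum_mul_single, hlam]
      rw [Finset.sum_congr rfl (fun j _ => e1 j),
        Finset.sum_congr rfl (fun k _ => e2 k)] at hE
      have e3 : ∑ k, lam k * (0 - (x i₀ - (s k i₀ : ℝ)))
          = (∑ k, lam k * (s k i₀ : ℝ)) - x i₀ := by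
        have e4 : ∀ k : Fin N, lam k * (0 - (x i₀ - (s k i₀ : ℝ)))
            = lam k * (s k i₀ : ℝ) - lam k * x i₀ := fun k => by ring
        rw [Finset.sum_congr rfl (fun k _ => e4 k), Finset.sum_sub_distrib,
          ← Finset.sum_mul, hsum1, one_mul]
      rw [e3] at hE
      have hE0 : (LinearMap.snd ℝ (Fin n → ℝ) ℝ) ((Pi.single i₀ (1:ℝ), (0:ℝ))) = 0 := rfl
      rw [hE0] at hE
      linarith
    have hbnd : (∑ j, mu j * (β j : ℝ)) + ∑ k, lam k * (-(a k : ℝ)) ≤ t := by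
      have hB := hμb
      rw [Fin.sum_univ_add] at hB
      have e1 : ∀ j : Fin NA, μ (Fin.castAdd N j) * bb (Fin.castAdd N j)
          = mu j * (β j : ℝ) := by intro j; rw [hbleft, hmu]
      have e2 : ∀ k : Fin N, μ (Fin.natAdd NA k) * bb (Fin.natAdd NA k)
          = lam k * (-(a k : ℝ)) := by intro k; rw [hbright, hlam]
      rw [Finset.sum_congr rfl (fun j _ => e1 j),
        Finset.sum_congr rfl (fun k _ => e2 k)] at hB
      exact hB
    set rest : ℝ := t - ((∑ j, mu j * (β j : ℝ)) + ∑ k, lam k * (-(a k : ℝ))) with hrest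
    have hrest0 : 0 ≤ rest := by rw [hrest]; linarith
    set cc : Fin (NA + 1) → ℝ := Fin.snoc mu rest with hcc
    have hcc0 : ∀ k, 0 ≤ cc k := by
      intro k
      refine Fin.lastCases ?_ ?_ k
      · rw [hcc]; rw [Fin.snoc_last]; exact hrest0
      · intro j; rw [hcc]; rw [Fin.snoc_castSucc]; exact hμ0 _
    refine ⟨∑ k, lam k • ratToReal ((s k), -(a k)), ?_,
      ∑ k, cc k • ratToReal (W k), ⟨cc, hcc0, rfl⟩, ?_⟩
    · have hcm : Finset.univ.centerMass lam (fun k => ratToReal ((s k), -(a k)))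
          = ∑ k, lam k • ratToReal ((s k), -(a k)) :=
        Finset.univ.centerMass_eq_of_sum_1 _ hsum1
      rw [← hcm]
      exact Finset.univ.centerMass_mem_convexHull (fun k _ => hμ0 _)
        (by rw [hsum1]; norm_num) (fun k _ => Set.mem_range_self k)
    · have hfst : ∀ i, ((∑ k, lam k • ratToReal ((s k), -(a k)))
          + ∑ k, cc k • ratToReal (W k)).1 i = x i := by
        intro i
        have ha1 : ((∑ k, lam k • ratToReal ((s k), -(a k))) : (Fin n → ℝ) × ℝ).1 i
            = ∑ k, lam k * (s k i : ℝ) := sum_smul_pair_fst _ _ i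
        have ha2 : ((∑ k, cc k • ratToReal (W k)) : (Fin n → ℝ) × ℝ).1 i
            = ∑ j, mu j * (α j i : ℝ) := by
          rw [sum_smul_pair_fst _ _ i, Fin.sum_univ_castSucc]
          have hl : cc (Fin.last NA) * (ratToReal (W (Fin.last NA))).1 i = 0 := by
            simp [hW, ratToReal]
          rw [hl, add_zero]
          refine Finset.sum_congr rfl fun j _ => ?_
          simp [hcc, hW, ratToReal]
        show ((∑ k, lam k • ratToReal ((s k), -(a k))) : (Fin n → ℝ) × ℝ).1 i
          + ((∑ k, cc k • ratToReal (W k)) : (Fin n → ℝ) × ℝ).1 i = x i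
        rw [ha1, ha2, hx_eq i]
      have hsnd : ((∑ k, lam k • ratToReal ((s k), -(a k)))
          + ∑ k, cc k • ratToReal (W k)).2 = t := by
        have ha1 : ((∑ k, lam k • ratToReal ((s k), -(a k))) : (Fin n → ℝ) × ℝ).2
            = ∑ k, lam k * (-(a k : ℝ)) := by
          rw [sum_smul_pair_snd]
          refine Finset.sum_congr rfl fun k _ => ?_
          simp [ratToReal]
        have ha2 : ((∑ k, cc k • ratToReal (W k)) : (Fin n → ℝ) × ℝ).2
            = (∑ j, mu j * (β j : ℝ)) + rest := by
          rw [sum_smul_pair_snd, Fin.sum_univ_castSucc]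
          have hl : cc (Fin.last NA) * (ratToReal (W (Fin.last NA))).2 = rest := by
            simp [hcc, hW, ratToReal]
          rw [hl]
          congr 1
          refine Finset.sum_congr rfl fun j _ => ?_
          simp [hcc, hW, ratToReal]
        show ((∑ k, lam k • ratToReal ((s k), -(a k))) : (Fin n → ℝ) × ℝ).2
          + ((∑ k, cc k • ratToReal (W k)) : (Fin n → ℝ) × ℝ).2 = t
        rw [ha1, ha2, hrest]
        ring
      exact Prod.ext (funext hfst) hsnd
  · -- easy direction
    rintro ⟨q, hq, z, ⟨cc, hcc0, hzeq⟩, hqz⟩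
    have hub : ∀ y ∈ Q, (∑ i, x i * y i) - g y ≤ t := by
      intro y hy
      have hlin : IsLinearMap ℝ (fun p : (Fin n → ℝ) × ℝ => (∑ i, p.1 i * y i) - p.2) := by
        constructor
        · intro p q
          simp only [Prod.fst_add, Pi.add_apply, Prod.snd_add, add_mul,
            Finset.sum_add_distrib]
          ring
        · intro r p
          simp only [Prod.smul_fst, Pi.smul_apply, Prod.smul_snd, smul_eq_mul,
            Finset.mul_sum]
          rw [mul_sub, Finset.mul_sum]
          congr 1
          exact Finset.sum_congr rfl fun i _ => by ring
      have hconv : Convex ℝ {p : (Fin n → ℝ) × ℝ | (∑ i, p.1 i * y i) - p.2 ≤ g y} :=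
        convex_halfSpace_le hlin (g y)
      have hsub : (Set.range fun m => ratToReal ((fun k => ((s k), -(a k))) m)) ⊆
          {p : (Fin n → ℝ) × ℝ | (∑ i, p.1 i * y i) - p.2 ≤ g y} := by
        rintro _ ⟨k, rfl⟩
        simp only [Set.mem_setOf_eq, ratToReal, Rat.cast_neg, sub_neg_eq_add]
        rw [hg y hy]
        exact le_ciSup (f := fun k : Fin N => (∑ i, ((s k i : ℝ)) * y i) + (a k : ℝ))
          (Set.Finite.bddAbove (Set.finite_range _)) k
      have hq' : (∑ i, q.1 i * y i) - q.2 ≤ g y :=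
        convexHull_min hsub hconv hq
      have hz' : (∑ i, z.1 i * y i) ≤ z.2 := by
        have hz1 : ∀ i, z.1 i = ∑ k, cc k * ((W k).1 i : ℝ) := by
          intro i; rw [hzeq]; exact sum_smul_pair_fst _ _ i
        have hz2 : z.2 = ∑ k, cc k * ((W k).2 : ℝ) := by
          rw [hzeq]; exact sum_smul_pair_snd _ _
        calc ∑ i, z.1 i * y i
            = ∑ i, (∑ k, cc k * ((W k).1 i : ℝ)) * y i :=
              Finset.sum_congr rfl fun i _ => by rw [hz1]
          _ = ∑ k, cc k * ∑ i, ((W k).1 i : ℝ) * y i := by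
              simp_rw [Finset.sum_mul]
              rw [Finset.sum_comm]
              refine Finset.sum_congr rfl fun k _ => ?_
              rw [Finset.mul_sum]
              refine Finset.sum_congr rfl fun i _ => by ring
          _ ≤ ∑ k, cc k * ((W k).2 : ℝ) := by
              refine Finset.sum_le_sum fun k _ => ?_
              refine mul_le_mul_of_nonneg_left ?_ (hcc0 k)
              refine Fin.lastCases ?_ ?_ k
              · simp [hW]
              · intro j
                simp only [hW, Fin.snoc_castSucc]
                exact (hQmem y).1 hy j
          _ = z.2 := hz2.symm
      have h1 := congrArg Prod.fst hqz
      have h2 := congrArg Prod.snd hqz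
      have hx : ∀ i, x i = q.1 i + z.1 i := fun i => (congrFun h1 i).symm
      have ht : t = q.2 + z.2 := h2.symm
      have hsplit : ∑ i, x i * y i = (∑ i, q.1 i * y i) + ∑ i, z.1 i * y i := by
        rw [← Finset.sum_add_distrib]
        refine Finset.sum_congr rfl fun i _ => by rw [hx i]; ring
      rw [hsplit, ht]
      linarith
    obtain ⟨y₀, hy₀⟩ := hQne
    have hBdd : BddAbove ((fun y => (∑ i, x i * y i) - g y) '' Q) := by
      refine ⟨t, ?_⟩
      rintro v ⟨y, hy, rfl⟩
      exact hub y hy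
    have hxD : x ∈ D := by rw [hD]; exact hBdd
    refine ⟨hxD, ?_⟩
    rw [hh x hxD]
    refine csSup_le ⟨_, ⟨y₀, hy₀, rfl⟩⟩ ?_
    rintro v ⟨y, hy, rfl⟩
    exact hub y hy
end

section
/- Let n, r be positive integers, let c > 0 be a real number, and let b₁, …, b_r ∈ ℝⁿ each have all components nonnegative. Define g on ℝⁿ_{<0} = {y ∈ ℝⁿ : ∀i, yᵢ < 0} by g(y) = c · max_{1≤i≤r} ⟨bᵢ,y⟩. Then the Newton convex body of g equals c • (convexHull{b₁,…,b_r}) + ℝⁿ_{≥0}; that is, {x ∈ ℝⁿ : the set {⟨x,y⟩ − g(y) : y ∈ ℝⁿ_{<0}} is bounded above} = {c·p + q : p ∈ convexHull ℝ {b₁,…,b_r}, q ∈ ℝⁿ, ∀i, qᵢ ≥ 0}. -/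
open Pointwise


/-- For `c > 0` and `b₁, …, b_r ∈ ℝⁿ_{≥0}`, the Newton convex body of
`g(y) = c · max_k ⟨b_k, y⟩` on `ℝⁿ_{<0}` equals
`c • convexHull{b₁,…,b_r} + ℝⁿ_{≥0}`. -/
theorem newton_body_of_max_linear (n r : ℕ) (hn : 0 < n) (hr : 0 < r)
    (c : ℝ) (hc : 0 < c) (b : Fin r → Fin n → ℝ) (hb : ∀ k i, 0 ≤ b k i) :
    {x : Fin n → ℝ |
        BddAbove ((fun y => (∑ i, x i * y i) - c * ⨆ k : Fin r, ∑ i, b k i * y i) ''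
          {y : Fin n → ℝ | ∀ i, y i < 0})} =
    {x : Fin n → ℝ | ∃ p ∈ convexHull ℝ (Set.range b), ∃ q : Fin n → ℝ,
        (∀ i, 0 ≤ q i) ∧ x = c • p + q} := by
  classical
  haveI : Nonempty (Fin r) := ⟨⟨0, hr⟩⟩
  set m : (Fin n → ℝ) → ℝ := fun y => ⨆ k : Fin r, ∑ i, b k i * y i with hm
  have hbdd : ∀ y : Fin n → ℝ, BddAbove (Set.range fun k : Fin r => ∑ i, b k i * y i) :=
    fun y => (Set.finite_range _).bddAbove
  set K := convexHull ℝ (Set.range b) with hK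
  -- scaling of m
  have hmscale : ∀ (t : ℝ), 0 ≤ t → ∀ y : Fin n → ℝ, m (t • y) = t * m y := by
    intro t ht y
    have : ∀ k : Fin r, (∑ i, b k i * (t • y) i) = t * ∑ i, b k i * y i := by
      intro k
      simp only [Pi.smul_apply, smul_eq_mul, Finset.mul_sum]
      congr 1; ext i; ring
    simp only [hm, this]
    exact (Real.mul_iSup_of_nonneg ht _).symm
  ext x
  simp only [Set.mem_setOf_eq]
  constructor
  · -- hard direction
    intro hx
    obtain ⟨M, hM⟩ := hx
    have hM' : ∀ y : Fin n → ℝ, (∀ i, y i < 0) →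
        (∑ i, x i * y i) - c * m y ≤ M := by
      intro y hy
      exact hM ⟨y, hy, rfl⟩
    -- step A : nonpositive on the open cone
    have hneg : ∀ y : Fin n → ℝ, (∀ i, y i < 0) →
        (∑ i, x i * y i) - c * m y ≤ 0 := by
      intro y hy
      by_contra h
      push_neg at h
      set d := (∑ i, x i * y i) - c * m y with hd
      have hdM : d ≤ M := hM' y hy
      have hM0 : 0 < M + 1 := by linarith
      set t := (M + 1) / d with htdef
      have ht : 0 < t := div_pos hM0 h
      have hmem : ∀ i, (t • y) i < 0 := fun i =>
        mul_neg_of_pos_of_neg ht (hy i)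
      have hx2 : (∑ i, x i * (t • y) i) - c * m (t • y) ≤ M := hM' _ hmem
      have hsum : (∑ i, x i * (t • y) i) = t * ∑ i, x i * y i := by
        simp only [Pi.smul_apply, smul_eq_mul, Finset.mul_sum]
        congr 1; ext i; ring
      rw [hsum, hmscale t ht.le y] at hx2
      have : t * d = M + 1 := by
        rw [htdef]; field_simp
      nlinarith [hx2]
    -- step B : extend to the closed cone
    have hclos : ∀ y : Fin n → ℝ, (∀ i, y i ≤ 0) →
        (∑ i, x i * y i) ≤ c * m y := by
      intro y hy
      by_contra h
      push_neg at h
      set ε := ((∑ i, x i * y i) - c * m y) / (|∑ i, x i| + 1) with hε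
      have hden : (0:ℝ) < |∑ i, x i| + 1 := by positivity
      have hεpos : 0 < ε := div_pos (by linarith) hden
      set y' : Fin n → ℝ := fun i => y i - ε with hy'
      have hy'neg : ∀ i, y' i < 0 := fun i => by
        simp only [hy']; have := hy i; linarith
      have hA := hneg y' hy'neg
      -- m y' ≤ m y
      have hmy : m y' ≤ m y := by
        apply ciSup_le
        intro k
        refine le_trans ?_ (le_ciSup (hbdd y) k)
        apply Finset.sum_le_sum
        intro i _
        have := hb k i
        have : b k i * y' i ≤ b k i * y i := by
          apply mul_le_mul_of_nonneg_left _ (hb k i)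
          simp only [hy']; linarith
        exact this
      have hsum' : (∑ i, x i * y' i) = (∑ i, x i * y i) - ε * ∑ i, x i := by
        simp only [hy', mul_sub, Finset.sum_sub_distrib, Finset.mul_sum]
        congr 1; congr 1; ext i; ring
      rw [hsum'] at hA
      have hbound : ε * ∑ i, x i ≤ ε * |∑ i, x i| :=
        mul_le_mul_of_nonneg_left (le_abs_self _) hεpos.le
      have hεval : ε * (|∑ i, x i| + 1) = (∑ i, x i * y i) - c * m y := by
        rw [hε]; field_simp
      nlinarith [mul_le_mul_of_nonneg_left hmy hc.le]
    -- step C : separation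
    by_contra hxS
    set S : Set (Fin n → ℝ) :=
      {z | ∃ p ∈ K, ∃ q : Fin n → ℝ, (∀ i, 0 ≤ q i) ∧ z = c • p + q} with hS
    have hxS' : x ∉ S := hxS
    have hSconv : Convex ℝ S := by
      rintro z1 ⟨p1, hp1, q1, hq1, rfl⟩ z2 ⟨p2, hp2, q2, hq2, rfl⟩ a bb ha hbb hab
      refine ⟨a • p1 + bb • p2, (convex_convexHull ℝ _) hp1 hp2 ha hbb hab,
        a • q1 + bb • q2, fun i => add_nonneg (mul_nonneg ha (hq1 i)) (mul_nonneg hbb (hq2 i)),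
        ?_⟩
      module
    have hScl : IsClosed S := by
      have hSeq : S = (c • K) + Set.Ici (0 : Fin n → ℝ) := by
        ext z
        simp only [hS, Set.mem_setOf_eq, Set.mem_add, Set.mem_smul_set, Set.mem_Ici]
        constructor
        · rintro ⟨p, hp, q, hq, rfl⟩
          exact ⟨c • p, ⟨p, hp, rfl⟩, q, fun i => hq i, rfl⟩
        · rintro ⟨w, ⟨p, hp, rfl⟩, q, hq, rfl⟩
          exact ⟨p, hp, q, fun i => hq i, rfl⟩
      rw [hSeq]
      have hKcomp : IsCompact K := (Set.finite_range b).isCompact_convexHull ℝ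
      have hcK : IsCompact (c • K) := by
        rw [← Set.image_smul]
        exact hKcomp.image (continuous_const_smul c)
      exact IsClosed.add_left_of_isCompact isClosed_Ici hcK
    obtain ⟨f, u, hfu, hux⟩ := geometric_hahn_banach_closed_point hSconv hScl hxS'
    set y : Fin n → ℝ := fun i => f (fun j => if i = j then 1 else 0) with hy
    have hfrep : ∀ z : Fin n → ℝ, f z = ∑ i, z i * y i := by
      intro z
      conv_lhs => rw [pi_eq_sum_univ z]
      rw [map_sum]
      apply Finset.sum_congr rfl
      intro i _
      rw [map_smul]
      simp [hy, smul_eq_mul]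
    -- base point
    have hb0 : c • b ⟨0, hr⟩ ∈ S :=
      ⟨b ⟨0, hr⟩, subset_convexHull ℝ _ ⟨⟨0, hr⟩, rfl⟩, 0, fun i => le_refl 0, by simp⟩
    -- y ≤ 0 componentwise
    have hyneg : ∀ i, y i ≤ 0 := by
      intro i
      by_contra h
      push_neg at h
      set z0 := c • b ⟨0, hr⟩ with hz0
      have hfz0 : f z0 < u := hfu z0 hb0
      set t := (u - f z0) / y i with ht
      have htpos : 0 < t := div_pos (by linarith) h
      have hmem : z0 + t • (fun j => if i = j then (1:ℝ) else 0) ∈ S := by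
        refine ⟨b ⟨0, hr⟩, subset_convexHull ℝ _ ⟨⟨0, hr⟩, rfl⟩,
          t • (fun j => if i = j then (1:ℝ) else 0), fun j => ?_, rfl⟩
        simp only [Pi.smul_apply, smul_eq_mul]
        split <;> simp [htpos.le]
      have := hfu _ hmem
      have hfe : f (fun j => if i = j then (1:ℝ) else 0) = y i := rfl
      rw [map_add, map_smul, map_smul, smul_eq_mul, smul_eq_mul, hfe] at this
      have hz0f : f z0 = c * f (b ⟨0, hr⟩) := by rw [hz0, map_smul, smul_eq_mul]
      have hteq : t * y i = u - f z0 := by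
        rw [ht]; field_simp
      linarith
    -- each c • b k in S
    have hbk : ∀ k : Fin r, c * (∑ i, b k i * y i) < u := by
      intro k
      have hmemk : c • b k ∈ S :=
        ⟨b k, subset_convexHull ℝ _ ⟨k, rfl⟩, 0, fun i => le_refl 0, by simp⟩
      have := hfu _ hmemk
      rw [map_smul, smul_eq_mul, hfrep] at this
      exact this
    have hmu : c * m y ≤ u := by
      rw [hm, Real.mul_iSup_of_nonneg hc.le]
      exact ciSup_le fun k => (hbk k).le
    have hfx : f x = ∑ i, x i * y i := hfrep x
    have := hclos y hyneg
    rw [hfx] at hux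
    linarith
  · -- easy direction
    rintro ⟨p, hp, q, hq, rfl⟩
    refine ⟨0, ?_⟩
    rintro z ⟨y, hy, rfl⟩
    simp only [Set.mem_setOf_eq] at hy
    have h1 : (∑ i, p i * y i) ≤ m y := by
      have hsub : Set.range b ⊆ {z : Fin n → ℝ | ∑ i, z i * y i ≤ m y} := by
        rintro _ ⟨k, rfl⟩
        exact le_ciSup (hbdd y) k
      have hlin : IsLinearMap ℝ (fun z : Fin n → ℝ => ∑ i, z i * y i) := by
        constructor
        · intro a bb; simp [add_mul, Finset.sum_add_distrib]
        · intro t a; simp [Finset.mul_sum, smul_eq_mul]; congr 1; ext i; ring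
      exact convexHull_min hsub (convex_halfSpace_le hlin _) hp
    have h2 : (∑ i, q i * y i) ≤ 0 :=
      Finset.sum_nonpos fun i _ => mul_nonpos_of_nonneg_of_nonpos (hq i) (hy i).le
    show (∑ i, (c • p + q) i * y i) - c * m y ≤ 0
    have h3 : (∑ i, (c • p + q) i * y i) = c * (∑ i, p i * y i) + ∑ i, q i * y i := by
      simp only [Pi.add_apply, Pi.smul_apply, smul_eq_mul, add_mul,
        Finset.sum_add_distrib, Finset.mul_sum]
      congr 1; congr 1; ext i; ring
    rw [h3]
    have : c * (∑ i, p i * y i) ≤ c * m y := mul_le_mul_of_nonneg_left h1 hc.le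
    linarith
end

section
/- Let n be a positive integer and let g : ℝⁿ → ℝ be convex on ℝⁿ_{<0} = {y ∈ ℝⁿ : ∀i, yᵢ < 0} and increasing in each variable there (if y, y' ∈ ℝⁿ_{<0} with yᵢ ≤ y'ᵢ for all i, then g(y) ≤ g(y')). Then for every real r > 0 and every x ∈ ℝⁿ, the set {⟨x,y⟩ − g(y) : y ∈ ℝⁿ_{<0}} is bounded above if and only if the set {⟨x,y⟩ − g(y) : y ∈ (−∞,−r)ⁿ} is bounded above. In other words, the Newton convex body of g is unchanged when the domain ℝⁿ_{<0} is shrunk to (−∞,−r)ⁿ for any r > 0. -/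
/-- For `g` convex and increasing in each variable on
`ℝⁿ_{<0} = {y : ∀ i, y i < 0}`, and any `r > 0`, the set
`{⟨x,y⟩ − g(y) : y ∈ ℝⁿ_{<0}}` is bounded above iff
`{⟨x,y⟩ − g(y) : y ∈ (−∞,−r)ⁿ}` is bounded above; i.e. the Newton convex body is
unchanged under shrinking the domain. -/
theorem newton_body_shrink_domain (n : ℕ) (hn : 0 < n)
    (g : (Fin n → ℝ) → ℝ)
    (hconv : ConvexOn ℝ {y : Fin n → ℝ | ∀ i, y i < 0} g)
    (hmono : ∀ y ∈ {y : Fin n → ℝ | ∀ i, y i < 0},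
      ∀ y' ∈ {y : Fin n → ℝ | ∀ i, y i < 0}, (∀ i, y i ≤ y' i) → g y ≤ g y')
    (r : ℝ) (hr : 0 < r) (x : Fin n → ℝ) :
    BddAbove ((fun y => (∑ i, x i * y i) - g y) '' {y : Fin n → ℝ | ∀ i, y i < 0}) ↔
    BddAbove ((fun y => (∑ i, x i * y i) - g y) '' {y : Fin n → ℝ | ∀ i, y i < -r}) := by
  constructor
  · intro h
    refine h.mono (Set.image_mono ?_)
    intro y hy i
    exact (hy i).trans (by linarith)
  · rintro ⟨M, hM⟩
    refine ⟨M + r * ∑ i, x i, ?_⟩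
    rintro z ⟨y, hy, rfl⟩
    set y' : Fin n → ℝ := fun i => y i - r with hy'
    have hy'mem : ∀ i, y' i < -r := fun i => by have := hy i; simp only [hy']; linarith
    have hy'mem0 : ∀ i, y' i < 0 := fun i => (hy'mem i).trans (by linarith)
    have hg : g y' ≤ g y := hmono y' hy'mem0 y hy fun i => by simp [hy']; linarith [hr.le]
    have hb : (∑ i, x i * y' i) - g y' ≤ M :=
      hM ⟨y', hy'mem, rfl⟩
    have hsum : ∑ i, x i * y i = (∑ i, x i * y' i) + r * ∑ i, x i := by
      simp only [hy', mul_sub, Finset.sum_sub_distrib, Finset.mul_sum]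
      simp [mul_comm]
    simp only [hsum]
    linarith
end
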